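/- arXiv:2301.01152 — 8 statements merged into one kernel-verified Lean document; each statement's English description precedes it below -/
import Mathlib

section
/- In the king graph on an n×n board with n even, every induced path has length at most n²/2 − 1 (equivalently, visits at most n²/2 vertices). -/
open SimpleGraph

abbrev Cell : Type := ℤ × ℤ

def sqBoard (n : ℕ) : Set Cell :=
  {a | 0 ≤ a.1 ∧ a.1 ≤ (n : ℤ) - 1 ∧ 0 ≤ a.2 ∧ a.2 ≤ (n : ℤ) - 1}

/-- The king graph on the standard `n × n` board. -/
def kingGraph (n : ℕ) : SimpleGraph Cell where
  Adj a b := a ≠ b ∧ a ∈ sqBoard n ∧ b ∈ sqBoard n ∧ |a.1 - b.1| ≤ 1 ∧ |a.2 - b.2| ≤ 1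
  symm := by
    constructor
    rintro a b ⟨h1, h2, h3, h4, h5⟩
    exact ⟨h1.symm, h3, h2, by rwa [abs_sub_comm], by rwa [abs_sub_comm]⟩
  loopless := by constructor; rintro a ⟨h, -⟩; exact h rfl

def board (m n : ℕ) : Set Cell :=
  {a | 0 ≤ a.1 ∧ a.1 ≤ (n : ℤ) - 1 ∧ 0 ≤ a.2 ∧ a.2 ≤ (m : ℤ) - 1}

/-- The grid graph on the standard `m × n` board (m rows, n columns). -/
def gridGraph (m n : ℕ) : SimpleGraph Cell where
  Adj a b := a ∈ board m n ∧ b ∈ board m n ∧ |a.1 - b.1| + |a.2 - b.2| = 1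
  symm := by
    constructor
    rintro a b ⟨h1, h2, h3⟩
    refine ⟨h2, h1, ?_⟩
    rw [abs_sub_comm b.1 a.1, abs_sub_comm b.2 a.2]
    exact h3
  loopless := by constructor; rintro a ⟨-, -, h⟩; simp at h

/-- A snake path: a path which is an induced subgraph. -/
def IsSnake {V : Type*} (G : SimpleGraph V) {a b : V} (p : G.Walk a b) : Prop :=
  p.IsPath ∧ ∀ u ∈ p.support, ∀ v ∈ p.support, G.Adj u v → s(u, v) ∈ p.edges

/-- The walk `p` makes a turn at `c` : it traverses a horizontal and a vertical edge at `c`. -/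
def TurnsAt {G : SimpleGraph Cell} {a b : Cell} (p : G.Walk a b) (c : Cell) : Prop :=
  ∃ u v : Cell, u ≠ v ∧ s(u, c) ∈ p.edges ∧ s(c, v) ∈ p.edges ∧
    ((u.2 = c.2 ∧ v.1 = c.1) ∨ (u.1 = c.1 ∧ v.2 = c.2))

noncomputable def turnCount {G : SimpleGraph Cell} {a b : Cell} (p : G.Walk a b) : ℕ :=
  Set.ncard {c : Cell | TurnsAt p c}

/-- The walk `p` goes straight through `c`. -/
def GoesStraight {G : SimpleGraph Cell} {a b : Cell} (p : G.Walk a b) (c : Cell) : Prop :=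
  ∃ u v : Cell, u ≠ v ∧ s(u, c) ∈ p.edges ∧ s(c, v) ∈ p.edges ∧
    ((u.2 = c.2 ∧ v.2 = c.2) ∨ (u.1 = c.1 ∧ v.1 = c.1))

/-- `p` is a Hamiltonian path on the vertex set `S`. -/
def IsHamOn {V : Type*} {G : SimpleGraph V} (S : Set V) {a b : V} (p : G.Walk a b) : Prop :=
  p.IsPath ∧ ∀ v, v ∈ S ↔ v ∈ p.support

/-- The 4-cycle `a'—a''—b'—b''—a'` of the grid graph is free relative to `p`. -/
def FreeCycle {k : ℕ} {a b : Cell} (p : (gridGraph k k).Walk a b)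
    (a' a'' b' b'' : Cell) : Prop :=
  (gridGraph k k).Adj a' a'' ∧ (gridGraph k k).Adj a'' b' ∧
  (gridGraph k k).Adj b' b'' ∧ (gridGraph k k).Adj b'' a' ∧
  s(a', a'') ∈ p.edges ∧ s(a'', b') ∉ p.edges ∧
  s(b', b'') ∉ p.edges ∧ s(b'', a') ∉ p.edges ∧
  GoesStraight p a' ∧ GoesStraight p a'' ∧ TurnsAt p b' ∧ TurnsAt p b''

lemma no_triangle {V : Type*} {G : SimpleGraph V} {a b : V} {p : G.Walk a b}
    (hp : p.IsPath) {u v w : V} (huv : u ≠ v) (hvw : v ≠ w) (huw : u ≠ w)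
    (e1 : s(u,v) ∈ p.edges) (e2 : s(v,w) ∈ p.edges) (e3 : s(u,w) ∈ p.edges) : False := by
  induction p with
  | nil => simp at e1
  | @cons x y z h q ih =>
    rw [SimpleGraph.Walk.cons_isPath_iff] at hp
    obtain ⟨hq, hx⟩ := hp
    rw [SimpleGraph.Walk.edges_cons, List.mem_cons, Sym2.eq_iff] at e1 e2 e3
    rcases e1 with (⟨hu, hv⟩ | ⟨hu, hv⟩) | e1
    · rcases e3 with (⟨-, hw⟩ | ⟨-, hw⟩) | e3
      · exact hvw (hv.trans hw.symm)
      · exact huw (hu.trans hw.symm)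
      · exact hx (hu ▸ SimpleGraph.Walk.fst_mem_support_of_mem_edges q e3)
    · rcases e2 with (⟨-, hw⟩ | ⟨-, hw⟩) | e2
      · exact huw (hu.trans hw.symm)
      · exact hvw (hv.trans hw.symm)
      · exact hx (hv ▸ SimpleGraph.Walk.fst_mem_support_of_mem_edges q e2)
    · rcases e2 with (⟨hv, hw⟩ | ⟨hv, hw⟩) | e2
      · exact hx (hv ▸ SimpleGraph.Walk.snd_mem_support_of_mem_edges q e1)
      · rcases e3 with (⟨hu, -⟩ | ⟨hu, -⟩) | e3
        · exact huw (hu.trans hw.symm)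
        · exact huv (hu.trans hv.symm)
        · exact hx (hw ▸ SimpleGraph.Walk.snd_mem_support_of_mem_edges q e3)
      · rcases e3 with (⟨hu, hw⟩ | ⟨hu, hw⟩) | e3
        · exact hx (hu ▸ SimpleGraph.Walk.fst_mem_support_of_mem_edges q e1)
        · exact hx (hw ▸ SimpleGraph.Walk.snd_mem_support_of_mem_edges q e2)
        · exact ih hq e1 e2 e3

lemma support_mem_board {n : ℕ} {a b : Cell} (p : (kingGraph n).Walk a b)
    (hlen : p.length ≠ 0) : ∀ v ∈ p.support, v ∈ sqBoard n := by
  induction p with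
  | nil => simp at hlen
  | @cons x y z h q ih =>
    intro v hv
    rw [SimpleGraph.Walk.support_cons, List.mem_cons] at hv
    rcases hv with rfl | hv
    · exact h.2.1
    · cases q with
      | nil => simp at hv; subst hv; exact h.2.2.1
      | cons h' q' => exact ih (by simp [SimpleGraph.Walk.length_cons]) v hv


/-- In the king graph on an n×n board with n even, every induced path
has length at most n²/2 − 1. -/
theorem king_even_upper (n : ℕ) (hn : Even n) (h0 : 0 < n)
    {a b : Cell} (p : (kingGraph n).Walk a b) (hp : IsSnake (kingGraph n) p) :
    p.length ≤ n ^ 2 / 2 - 1 := by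
  obtain ⟨m, hm⟩ := hn
  by_cases hl : p.length = 0
  · rw [hl]; exact Nat.zero_le _
  have hboard := support_mem_board p hl
  classical
  set S : Finset Cell := p.support.toFinset with hS
  have hmemS : ∀ v, v ∈ S ↔ v ∈ p.support := by intro v; simp [hS]
  set f : Cell → Cell := fun c => (c.1 / 2, c.2 / 2) with hf
  have key : ∀ c ∈ S.image f, (S.filter fun x => f x = c).card ≤ 2 := by
    intro c _
    by_contra hcard
    push_neg at hcard
    obtain ⟨u, v, w, hu, hv, hw, huv, huw, hvw⟩ := Finset.two_lt_card_iff.mp hcard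
    rw [Finset.mem_filter] at hu hv hw
    have adj : ∀ x y : Cell, x ∈ S → y ∈ S → x ≠ y → f x = f y → (kingGraph n).Adj x y := by
      intro x y hx hy hxy hfxy
      have hbx := hboard x ((hmemS x).mp hx)
      have hby := hboard y ((hmemS y).mp hy)
      have h1 : x.1 / 2 = y.1 / 2 := congrArg Prod.fst hfxy
      have h2 : x.2 / 2 = y.2 / 2 := congrArg Prod.snd hfxy
      refine ⟨hxy, hbx, hby, ?_, ?_⟩ <;> rw [abs_le] <;> omega
    have a12 := adj u v hu.1 hv.1 huv (hu.2.trans hv.2.symm)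
    have a23 := adj v w hv.1 hw.1 hvw (hv.2.trans hw.2.symm)
    have a13 := adj u w hu.1 hw.1 huw (hu.2.trans hw.2.symm)
    have e1 := hp.2 u ((hmemS u).mp hu.1) v ((hmemS v).mp hv.1) a12
    have e2 := hp.2 v ((hmemS v).mp hv.1) w ((hmemS w).mp hw.1) a23
    have e3 := hp.2 u ((hmemS u).mp hu.1) w ((hmemS w).mp hw.1) a13
    exact no_triangle hp.1 huv hvw huw e1 e2 e3
  have hcard1 : S.card ≤ 2 * (S.image f).card := Finset.card_le_mul_card_image S 2 key
  have himg : S.image f ⊆ Finset.Icc (0:ℤ) ((m:ℤ) - 1) ×ˢ Finset.Icc (0:ℤ) ((m:ℤ) - 1) := by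
    intro c hc
    obtain ⟨x, hx, rfl⟩ := Finset.mem_image.mp hc
    have hbx := hboard x ((hmemS x).mp hx)
    obtain ⟨b1, b2, b3, b4⟩ := hbx
    have hnm : (n:ℤ) = 2 * m := by rw [hm]; push_cast; ring
    simp only [Finset.mem_product, Finset.mem_Icc, hf]
    constructor <;> constructor <;> omega
  have hcard2 : (S.image f).card ≤ m * m := by
    calc (S.image f).card ≤ _ := Finset.card_le_card himg
      _ = m * m := by
        rw [Finset.card_product, Int.card_Icc]
        simp only [sub_add_cancel, sub_zero, Int.toNat_natCast]
  have hScard : S.card = p.length + 1 := by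
    rw [hS, List.toFinset_card_of_nodup hp.1.support_nodup, SimpleGraph.Walk.length_support]
  have hsq : n ^ 2 / 2 = 2 * (m * m) := by
    have : n ^ 2 = (2 * (m * m)) * 2 := by rw [hm]; ring
    omega
  omega
end

section
/- For every even positive integer n, the king graph on an n×n board contains an induced path of length n²/2 − 1. -/
open SimpleGraph

def mkWalk {V : Type*} (G : SimpleGraph V) (f : ℕ → V) :
    (N : ℕ) → (h : ∀ i < N, G.Adj (f i) (f (i+1))) → G.Walk (f 0) (f N)
  | 0, _ => .nil
  | (N+1), h => (mkWalk G f N (fun i hi => h i (by omega))).concat (h N (by omega))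

lemma mkWalk_support {V : Type*} (G : SimpleGraph V) (f : ℕ → V) (N : ℕ)
    (h : ∀ i < N, G.Adj (f i) (f (i+1))) :
    (mkWalk G f N h).support = (List.range (N+1)).map f := by
  induction N with
  | zero => simp [mkWalk, List.range_succ]
  | succ N ih =>
      rw [mkWalk, SimpleGraph.Walk.support_concat, ih, List.range_succ,
        List.range_succ (n := N+1)]
      simp [List.range_succ]

lemma mkWalk_edges {V : Type*} (G : SimpleGraph V) (f : ℕ → V) (N : ℕ)
    (h : ∀ i < N, G.Adj (f i) (f (i+1))) :
    (mkWalk G f N h).edges = (List.range N).map (fun i => s(f i, f (i+1))) := by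
  induction N with
  | zero => simp [mkWalk]
  | succ N ih =>
      rw [mkWalk, SimpleGraph.Walk.edges_concat, ih, List.range_succ]
      simp

lemma mkWalk_length {V : Type*} (G : SimpleGraph V) (f : ℕ → V) (N : ℕ)
    (h : ∀ i < N, G.Adj (f i) (f (i+1))) :
    (mkWalk G f N h).length = N := by
  induction N with
  | zero => simp [mkWalk]
  | succ N ih => rw [mkWalk, SimpleGraph.Walk.length_concat, ih]



lemma mkWalk_isSnake {V : Type*} (G : SimpleGraph V) (f : ℕ → V) (N : ℕ)
    (h : ∀ i < N, G.Adj (f i) (f (i+1)))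
    (hinj : ∀ i ≤ N, ∀ j ≤ N, f i = f j → i = j)
    (hfar : ∀ i j, i ≤ N → j ≤ N → G.Adj (f i) (f j) → j = i + 1 ∨ i = j + 1) :
    IsSnake G (mkWalk G f N h) := by
  constructor
  · rw [SimpleGraph.Walk.isPath_def, mkWalk_support]
    refine List.Nodup.map_on ?_ List.nodup_range
    intro i hi j hj hij
    exact hinj i (by simpa using Nat.lt_succ_iff.mp (List.mem_range.mp hi))
      j (by simpa using Nat.lt_succ_iff.mp (List.mem_range.mp hj)) hij
  · intro u hu v hv hadj
    rw [mkWalk_support] at hu hv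
    obtain ⟨i, hi, rfl⟩ := List.mem_map.mp hu
    obtain ⟨j, hj, rfl⟩ := List.mem_map.mp hv
    rw [List.mem_range] at hi hj
    rw [mkWalk_edges]
    rcases hfar i j (by omega) (by omega) hadj with hc | hc
    · subst hc
      exact List.mem_map.mpr ⟨i, List.mem_range.mpr (by omega), rfl⟩
    · subst hc
      rw [Sym2.eq_swap]
      exact List.mem_map.mpr ⟨j, List.mem_range.mpr (by omega), rfl⟩


def Spec (n : ℕ) (f : ℕ → Cell) : Prop :=
  (∀ i < n^2/2 - 1,
      (f (i+1)).1 - (f i).1 ≤ 1 ∧ (f i).1 - (f (i+1)).1 ≤ 1 ∧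
      (f (i+1)).2 - (f i).2 ≤ 1 ∧ (f i).2 - (f (i+1)).2 ≤ 1 ∧
      ¬((f (i+1)).1 = (f i).1 ∧ (f (i+1)).2 = (f i).2)) ∧
  (∀ j < n^2/2, ∀ i < j - 1,
      2 ≤ (f j).1 - (f i).1 ∨ 2 ≤ (f i).1 - (f j).1 ∨
      2 ≤ (f j).2 - (f i).2 ∨ 2 ≤ (f i).2 - (f j).2) ∧
  (∀ i < n^2/2,
      0 ≤ (f i).1 ∧ (f i).1 ≤ (n:ℤ)-1 ∧ 0 ≤ (f i).2 ∧ (f i).2 ≤ (n:ℤ)-1) ∧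
  f 0 = (0,0) ∧ f (n^2/2 - 1) = ((n:ℤ)-1, 0) ∧
  (∀ i < n^2/2, f i ≠ ((1:ℤ),(0:ℤ)) ∧ f i ≠ ((n:ℤ)-1, 1))



/-- A function satisfying the arithmetic conditions gives a snake of length n^2/2 - 1. -/
lemma spec_to_snake (n : ℕ) (hn : 2 ≤ n) (f : ℕ → Cell)
    (hchain : ∀ i < n^2/2 - 1,
      (f (i+1)).1 - (f i).1 ≤ 1 ∧ (f i).1 - (f (i+1)).1 ≤ 1 ∧
      (f (i+1)).2 - (f i).2 ≤ 1 ∧ (f i).2 - (f (i+1)).2 ≤ 1 ∧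
      ¬((f (i+1)).1 = (f i).1 ∧ (f (i+1)).2 = (f i).2))
    (hfar : ∀ j < n^2/2, ∀ i < j - 1,
      2 ≤ (f j).1 - (f i).1 ∨ 2 ≤ (f i).1 - (f j).1 ∨
      2 ≤ (f j).2 - (f i).2 ∨ 2 ≤ (f i).2 - (f j).2)
    (hboard : ∀ i < n^2/2,
      0 ≤ (f i).1 ∧ (f i).1 ≤ (n:ℤ)-1 ∧ 0 ≤ (f i).2 ∧ (f i).2 ≤ (n:ℤ)-1) :
    ∃ (a b : Cell) (p : (kingGraph n).Walk a b),
      IsSnake (kingGraph n) p ∧ p.length = n ^ 2 / 2 - 1 := by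
  have hN : 1 ≤ n^2/2 := by
    have h4 : 4 ≤ n^2 := by nlinarith
    have := Nat.div_le_div_right (c:=2) h4
    omega
  set N := n^2/2 - 1 with hNdef
  have hNN : ∀ i ≤ N, i < n^2/2 := by omega
  have hadj : ∀ i < N, (kingGraph n).Adj (f i) (f (i+1)) := by
    intro i hi
    obtain ⟨h1, h2, h3, h4, h5⟩ := hchain i hi
    refine ⟨?_, hboard i (hNN i (by omega)), hboard (i+1) (hNN (i+1) (by omega)), ?_, ?_⟩
    · intro he; rw [he] at h5; exact h5 ⟨rfl, rfl⟩
    · rw [abs_le]; omega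
    · rw [abs_le]; omega
  have hne : ∀ i ≤ N, ∀ j ≤ N, i < j → f i ≠ f j := by
    intro i hi j hj hij he
    rcases Nat.lt_or_ge i (j-1) with hc | hc
    · rcases hfar j (hNN j hj) i hc with h | h | h | h <;> rw [he] at h <;> omega
    · have : j = i + 1 := by omega
      subst this
      obtain ⟨-, -, -, -, h5⟩ := hchain i (by omega)
      rw [he] at h5; exact h5 ⟨rfl, rfl⟩
  refine ⟨f 0, f N, mkWalk (kingGraph n) f N hadj, ?_, mkWalk_length _ _ _ _⟩
  apply mkWalk_isSnake
  · intro i hi j hj he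
    by_contra hne2
    rcases Nat.lt_or_ge i j with hc | hc
    · exact hne i hi j hj hc he
    · exact hne j hj i hi (by omega) he.symm
  · intro i j hi hj hadj2
    by_contra hc
    push_neg at hc
    obtain ⟨hne0, -, -, hx, hy⟩ := hadj2
    rw [abs_le] at hx hy
    rcases Nat.lt_or_ge i j with h | h
    · have : i < j - 1 := by omega
      rcases hfar j (hNN j hj) i this with hh | hh | hh | hh <;> omega
    · rcases Nat.lt_or_ge j i with h2 | h2
      · have : j < i - 1 := by omega
        rcases hfar i (hNN i hi) j this with hh | hh | hh | hh <;> omega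
      · have : i = j := by omega
        subst this
        exact hne0 rfl


def l4 : List Cell := [(0,0),(0,1),(0,2),(1,3),(2,3),(3,2),(2,1),(3,0)]
def l6 : List Cell := [(0,0),(0,1),(0,2),(0,3),(0,4),(1,5),(2,5),(3,5),(4,5),
  (5,4),(5,3),(4,2),(3,3),(2,2),(2,1),(3,0),(4,0),(5,0)]

def pf (n : ℕ) : ℕ → Cell :=
  if n < 8 then (fun i => (if n = 6 then l6 else l4).getD i (0,0))
  else fun i =>
    if i < n-1 then ((0:ℤ), (i:ℤ))
    else if i < 2*n-3 then ((i:ℤ) - ((n:ℤ)-2), (n:ℤ)-1)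
    else if i < 3*n-7 then ((n:ℤ)-1, 3*(n:ℤ)-5-(i:ℤ))
    else if i = 3*n-7 then ((n:ℤ)-2, 2)
    else if i < 3*n-6+(n-4)^2/2 then
      ((pf (n-4) ((n-4)^2/2 + (3*n-7) - i)).1 + 2,
       (pf (n-4) ((n-4)^2/2 + (3*n-7) - i)).2 + 2)
    else if i = 3*n-6+(n-4)^2/2 then ((2:ℤ),(1:ℤ))
    else ((i:ℤ) - (3*(n:ℤ)-8) - (((n-4)^2/2 : ℕ) : ℤ), 0)
termination_by n
decreasing_by all_goals omega

lemma pf_seg1 (n i : ℕ) (h8 : 8 ≤ n) (hi : i < n-1) : pf n i = ((0:ℤ), (i:ℤ)) := by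
  rw [pf, if_neg (by omega : ¬ n < 8)]
  simp only [if_pos hi]

lemma pf_seg2 (n i : ℕ) (h8 : 8 ≤ n) (hi : n-1 ≤ i) (hi2 : i < 2*n-3) :
    pf n i = ((i:ℤ) - ((n:ℤ)-2), (n:ℤ)-1) := by
  rw [pf, if_neg (by omega : ¬ n < 8)]
  simp only [if_neg (by omega : ¬ i < n-1), if_pos hi2]

lemma pf_seg3 (n i : ℕ) (h8 : 8 ≤ n) (hi : 2*n-3 ≤ i) (hi2 : i < 3*n-7) :
    pf n i = ((n:ℤ)-1, 3*(n:ℤ)-5-(i:ℤ)) := by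
  rw [pf, if_neg (by omega : ¬ n < 8)]
  simp only [if_neg (by omega : ¬ i < n-1), if_neg (by omega : ¬ i < 2*n-3), if_pos hi2]

lemma pf_seg4 (n i : ℕ) (h8 : 8 ≤ n) (hi : i = 3*n-7) : pf n i = ((n:ℤ)-2, 2) := by
  rw [pf, if_neg (by omega : ¬ n < 8)]
  simp only [if_neg (by omega : ¬ i < n-1), if_neg (by omega : ¬ i < 2*n-3),
    if_neg (by omega : ¬ i < 3*n-7), if_pos hi]

lemma pf_seg5 (n i : ℕ) (h8 : 8 ≤ n) (hi : 3*n-7 < i) (hi2 : i < 3*n-6+(n-4)^2/2) :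
    pf n i = ((pf (n-4) ((n-4)^2/2 + (3*n-7) - i)).1 + 2,
       (pf (n-4) ((n-4)^2/2 + (3*n-7) - i)).2 + 2) := by
  rw [pf, if_neg (by omega : ¬ n < 8)]
  simp only [if_neg (by omega : ¬ i < n-1), if_neg (by omega : ¬ i < 2*n-3),
    if_neg (by omega : ¬ i < 3*n-7), if_neg (by omega : ¬ i = 3*n-7), if_pos hi2]

lemma pf_seg6 (n i : ℕ) (h8 : 8 ≤ n) (hi : i = 3*n-6+(n-4)^2/2) :
    pf n i = ((2:ℤ),(1:ℤ)) := by
  rw [pf, if_neg (by omega : ¬ n < 8)]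
  simp only [if_neg (by omega : ¬ i < n-1), if_neg (by omega : ¬ i < 2*n-3),
    if_neg (by omega : ¬ i < 3*n-7), if_neg (by omega : ¬ i = 3*n-7),
    if_neg (by omega : ¬ i < 3*n-6+(n-4)^2/2), if_pos hi]

lemma pf_seg7 (n i : ℕ) (h8 : 8 ≤ n) (hi : 3*n-6+(n-4)^2/2 < i) :
    pf n i = ((i:ℤ) - (3*(n:ℤ)-8) - (((n-4)^2/2 : ℕ) : ℤ), 0) := by
  rw [pf, if_neg (by omega : ¬ n < 8)]
  simp only [if_neg (by omega : ¬ i < n-1), if_neg (by omega : ¬ i < 2*n-3),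
    if_neg (by omega : ¬ i < 3*n-7), if_neg (by omega : ¬ i = 3*n-7),
    if_neg (by omega : ¬ i < 3*n-6+(n-4)^2/2), if_neg (by omega : ¬ i = 3*n-6+(n-4)^2/2)]

lemma pf4_eq : pf 4 = fun i => l4.getD i (0,0) := by rw [pf]; norm_num
lemma pf6_eq : pf 6 = fun i => l6.getD i (0,0) := by rw [pf]; norm_num

lemma spec4 : Spec 4 (fun i => l4.getD i (0,0)) := by unfold Spec; decide
lemma spec6 : Spec 6 (fun i => l6.getD i (0,0)) := by unfold Spec; decide


lemma key_arith (n : ℕ) (he : Even n) (h8 : 8 ≤ n) :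
    n^2/2 = (n-4)^2/2 + 4*n - 8 ∧ 8 ≤ (n-4)^2/2 := by
  obtain ⟨s, hs⟩ := he
  have ht : n = 2*(s-4)+8 := by omega
  have e1 : n^2 = 2*(2*(s-4)^2+16*(s-4)+32) := by rw [ht]; ring
  have e2 : (n-4)^2 = 2*(2*(s-4)^2+8*(s-4)+8) := by
    rw [show n-4 = 2*(s-4)+4 from by omega]; ring
  have f1 : n^2/2 = 2*(s-4)^2+16*(s-4)+32 := by
    rw [e1, Nat.mul_div_cancel_left _ two_pos]
  have f2 : (n-4)^2/2 = 2*(s-4)^2+8*(s-4)+8 := by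
    rw [e2, Nat.mul_div_cancel_left _ two_pos]
  constructor <;> omega

lemma spec_step (n : ℕ) (hn8 : 8 ≤ n) (he : Even n)
    (IH : Spec (n-4) (pf (n-4))) : Spec n (pf n) := by
  obtain ⟨key1, key2⟩ := key_arith n he hn8
  obtain ⟨ichain, ifar, iboard, i0, iN, iavoid⟩ := IH
  have hc4 : ((n-4:ℕ):ℤ) = (n:ℤ)-4 := by omega
  have iN5 : pf (n-4) ((n-4)^2/2 - 1) = ((n:ℤ)-5, 0) := by
    rw [iN, hc4]
    rw [Prod.ext_iff]
    exact ⟨by ring, rfl⟩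
  have auxEnd : ∀ idx, idx < (n-4)^2/2 - 1 → pf (n-4) idx ≠ ((n:ℤ)-5, 0) := by
    intro idx hidx heq
    rcases Nat.lt_or_ge idx ((n-4)^2/2 - 2) with hlt | hge
    · have := ifar ((n-4)^2/2 - 1) (by omega) idx (by omega)
      rw [iN5, heq] at this
      rcases this with h|h|h|h <;> simp at h
    · have h2 : idx = (n-4)^2/2 - 2 := by omega
      obtain ⟨-, -, -, -, c5⟩ := ichain idx (by omega)
      rw [show idx + 1 = (n-4)^2/2 - 1 from by omega, iN5, heq] at c5
      exact c5 ⟨rfl, rfl⟩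
  have auxStart : ∀ idx, 1 ≤ idx → idx < (n-4)^2/2 → pf (n-4) idx ≠ ((0:ℤ), (0:ℤ)) := by
    intro idx h1 h2 heq
    rcases Nat.lt_or_ge 1 idx with hlt | hge
    · have := ifar idx h2 0 (by omega)
      rw [i0, heq] at this
      rcases this with h|h|h|h <;> simp at h
    · have h3 : idx = 1 := by omega
      obtain ⟨-, -, -, -, c5⟩ := ichain 0 (by omega)
      rw [show (0:ℕ) + 1 = idx from by omega, i0, heq] at c5
      exact c5 ⟨rfl, rfl⟩
  have hseg : ∀ m, m < n^2/2 → m < n-1 ∨ (n-1 ≤ m ∧ m < 2*n-3) ∨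
      (2*n-3 ≤ m ∧ m < 3*n-7) ∨ m = 3*n-7 ∨ (3*n-7 < m ∧ m < 3*n-6+(n-4)^2/2) ∨
      m = 3*n-6+(n-4)^2/2 ∨ (3*n-6+(n-4)^2/2 < m) := by
    intro m hm; omega
  refine ⟨?_, ?_, ?_, ?_, ?_, ?_⟩
  · -- chain
    intro i hi
    have hcase : i < n-2 ∨ i = n-2 ∨ (n-1 ≤ i ∧ i < 2*n-4) ∨ i = 2*n-4 ∨
        (2*n-3 ≤ i ∧ i < 3*n-8) ∨ i = 3*n-8 ∨ i = 3*n-7 ∨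
        (3*n-6 ≤ i ∧ i + 1 < 3*n-6+(n-4)^2/2) ∨ i = 3*n-7+(n-4)^2/2 ∨
        i = 3*n-6+(n-4)^2/2 ∨ 3*n-5+(n-4)^2/2 ≤ i := by omega
    rcases hcase with h|h|⟨h,h'⟩|h|⟨h,h'⟩|h|h|⟨h,h'⟩|h|h|h
    · rw [pf_seg1 n i hn8 (by omega), pf_seg1 n (i+1) hn8 (by omega)]
      dsimp only; omega
    · rw [pf_seg1 n i hn8 (by omega), pf_seg2 n (i+1) hn8 (by omega) (by omega)]
      dsimp only; omega
    · rw [pf_seg2 n i hn8 (by omega) (by omega),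
        pf_seg2 n (i+1) hn8 (by omega) (by omega)]
      dsimp only; omega
    · rw [pf_seg2 n i hn8 (by omega) (by omega),
        pf_seg3 n (i+1) hn8 (by omega) (by omega)]
      dsimp only; omega
    · rw [pf_seg3 n i hn8 (by omega) (by omega),
        pf_seg3 n (i+1) hn8 (by omega) (by omega)]
      dsimp only; omega
    · rw [pf_seg3 n i hn8 (by omega) (by omega), pf_seg4 n (i+1) hn8 (by omega)]
      dsimp only; omega
    · rw [pf_seg4 n i hn8 (by omega), pf_seg5 n (i+1) hn8 (by omega) (by omega),
        show (n-4)^2/2 + (3*n-7) - (i+1) = (n-4)^2/2 - 1 from by omega, iN5]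
      dsimp only; omega
    · rw [pf_seg5 n i hn8 (by omega) (by omega),
        pf_seg5 n (i+1) hn8 (by omega) (by omega)]
      obtain ⟨c1, c2, c3, c4, c5⟩ := ichain ((n-4)^2/2 + (3*n-7) - (i+1)) (by omega)
      rw [show (n-4)^2/2 + (3*n-7) - (i+1) + 1 = (n-4)^2/2 + (3*n-7) - i from by omega]
        at c1 c2 c3 c4 c5
      dsimp only
      refine ⟨by omega, by omega, by omega, by omega, fun hh => c5 ⟨by omega, by omega⟩⟩
    · rw [pf_seg5 n i hn8 (by omega) (by omega), pf_seg6 n (i+1) hn8 (by omega),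
        show (n-4)^2/2 + (3*n-7) - i = 0 from by omega, i0]
      dsimp only; omega
    · rw [pf_seg6 n i hn8 (by omega), pf_seg7 n (i+1) hn8 (by omega)]
      dsimp only; omega
    · rw [pf_seg7 n i hn8 (by omega), pf_seg7 n (i+1) hn8 (by omega)]
      dsimp only; omega
  · -- far
    intro j hj i hij
    rcases hseg i (by omega) with hi1|⟨hi2a,hi2b⟩|⟨hi3a,hi3b⟩|hi4|⟨hi5a,hi5b⟩|hi6|hi7 <;>
      rcases hseg j hj with hj1|⟨hj2a,hj2b⟩|⟨hj3a,hj3b⟩|hj4|⟨hj5a,hj5b⟩|hj6|hj7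
    · -- (1,1)
      rw [pf_seg1 n i hn8 (by omega), pf_seg1 n j hn8 (by omega)]
      dsimp only
      omega
    · -- (1,2)
      rw [pf_seg1 n i hn8 (by omega), pf_seg2 n j hn8 (by omega) (by omega)]
      dsimp only
      omega
    · -- (1,3)
      rw [pf_seg1 n i hn8 (by omega), pf_seg3 n j hn8 (by omega) (by omega)]
      dsimp only
      omega
    · -- (1,4)
      rw [pf_seg1 n i hn8 (by omega), pf_seg4 n j hn8 (by omega)]
      dsimp only
      omega
    · -- (1,5)
      rw [pf_seg1 n i hn8 (by omega), pf_seg5 n j hn8 (by omega) (by omega)]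
      obtain ⟨b1, b2, b3, b4⟩ := iboard ((n-4)^2/2 + (3*n-7) - j) (by omega)
      rw [hc4] at b2 b4
      dsimp only
      omega
    · -- (1,6)
      rw [pf_seg1 n i hn8 (by omega), pf_seg6 n j hn8 (by omega)]
      dsimp only
      omega
    · -- (1,7)
      rw [pf_seg1 n i hn8 (by omega), pf_seg7 n j hn8 (by omega)]
      dsimp only
      omega
    · omega
    · -- (2,2)
      rw [pf_seg2 n i hn8 (by omega) (by omega), pf_seg2 n j hn8 (by omega) (by omega)]
      dsimp only
      omega
    · -- (2,3)
      rw [pf_seg2 n i hn8 (by omega) (by omega), pf_seg3 n j hn8 (by omega) (by omega)]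
      dsimp only
      omega
    · -- (2,4)
      rw [pf_seg2 n i hn8 (by omega) (by omega), pf_seg4 n j hn8 (by omega)]
      dsimp only
      omega
    · -- (2,5)
      rw [pf_seg2 n i hn8 (by omega) (by omega), pf_seg5 n j hn8 (by omega) (by omega)]
      obtain ⟨b1, b2, b3, b4⟩ := iboard ((n-4)^2/2 + (3*n-7) - j) (by omega)
      rw [hc4] at b2 b4
      dsimp only
      omega
    · -- (2,6)
      rw [pf_seg2 n i hn8 (by omega) (by omega), pf_seg6 n j hn8 (by omega)]
      dsimp only
      omega
    · -- (2,7)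
      rw [pf_seg2 n i hn8 (by omega) (by omega), pf_seg7 n j hn8 (by omega)]
      dsimp only
      omega
    · omega
    · omega
    · -- (3,3)
      rw [pf_seg3 n i hn8 (by omega) (by omega), pf_seg3 n j hn8 (by omega) (by omega)]
      dsimp only
      omega
    · -- (3,4)
      rw [pf_seg3 n i hn8 (by omega) (by omega), pf_seg4 n j hn8 (by omega)]
      dsimp only
      omega
    · -- (3,5)
      rw [pf_seg3 n i hn8 (by omega) (by omega), pf_seg5 n j hn8 (by omega) (by omega)]
      obtain ⟨b1, b2, b3, b4⟩ := iboard ((n-4)^2/2 + (3*n-7) - j) (by omega)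
      rw [hc4] at b2 b4
      dsimp only
      omega
    · -- (3,6)
      rw [pf_seg3 n i hn8 (by omega) (by omega), pf_seg6 n j hn8 (by omega)]
      dsimp only
      omega
    · -- (3,7)
      rw [pf_seg3 n i hn8 (by omega) (by omega), pf_seg7 n j hn8 (by omega)]
      dsimp only
      omega
    · omega
    · omega
    · omega
    · omega
    · -- (4,5)
      rw [pf_seg4 n i hn8 (by omega), pf_seg5 n j hn8 (by omega) (by omega)]
      have hidxM : (n-4)^2/2 + (3*n-7) - j < (n-4)^2/2 - 1 := by omega
      obtain ⟨b1, b2, b3, b4⟩ := iboard ((n-4)^2/2 + (3*n-7) - j) (by omega)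
      rw [hc4] at b2 b4
      dsimp only
      by_cases hx : (pf (n-4) ((n-4)^2/2 + (3*n-7) - j)).1 ≤ (n:ℤ)-6
      · omega
      · by_cases hy0 : (pf (n-4) ((n-4)^2/2 + (3*n-7) - j)).2 = 0
        · have h1x : (pf (n-4) ((n-4)^2/2 + (3*n-7) - j)).1 = (n:ℤ)-5 := by omega
          exact (auxEnd ((n-4)^2/2 + (3*n-7) - j) hidxM (Prod.ext h1x hy0)).elim
        · by_cases hy1 : (pf (n-4) ((n-4)^2/2 + (3*n-7) - j)).2 = 1
          · have h1x : (pf (n-4) ((n-4)^2/2 + (3*n-7) - j)).1 = (n:ℤ)-4-1 := by omega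
            have hav := (iavoid ((n-4)^2/2 + (3*n-7) - j) (by omega)).2
            rw [hc4] at hav
            exact (hav (Prod.ext h1x hy1)).elim
          · omega
    · -- (4,6)
      rw [pf_seg4 n i hn8 (by omega), pf_seg6 n j hn8 (by omega)]
      dsimp only
      omega
    · -- (4,7)
      rw [pf_seg4 n i hn8 (by omega), pf_seg7 n j hn8 (by omega)]
      dsimp only
      omega
    · omega
    · omega
    · omega
    · omega
    · -- (5,5)
      rw [pf_seg5 n i hn8 (by omega) (by omega), pf_seg5 n j hn8 (by omega) (by omega)]
      have hfar2 := ifar ((n-4)^2/2 + (3*n-7) - i) (by omega)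
        ((n-4)^2/2 + (3*n-7) - j) (by omega)
      dsimp only
      rcases hfar2 with h|h|h|h <;> omega
    · -- (5,6)
      rw [pf_seg5 n i hn8 (by omega) (by omega), pf_seg6 n j hn8 (by omega)]
      have h1 : 1 ≤ (n-4)^2/2 + (3*n-7) - i := by omega
      obtain ⟨b1, b2, b3, b4⟩ := iboard ((n-4)^2/2 + (3*n-7) - i) (by omega)
      dsimp only
      by_cases hy : (pf (n-4) ((n-4)^2/2 + (3*n-7) - i)).2 = 0
      · by_cases hx0 : (pf (n-4) ((n-4)^2/2 + (3*n-7) - i)).1 = 0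
        · exact (auxStart ((n-4)^2/2 + (3*n-7) - i) h1 (by omega)
            (Prod.ext hx0 hy)).elim
        · by_cases hx1 : (pf (n-4) ((n-4)^2/2 + (3*n-7) - i)).1 = 1
          · exact ((iavoid ((n-4)^2/2 + (3*n-7) - i) (by omega)).1
              (Prod.ext hx1 hy)).elim
          · omega
      · omega
    · -- (5,7)
      rw [pf_seg5 n i hn8 (by omega) (by omega), pf_seg7 n j hn8 (by omega)]
      obtain ⟨b1, b2, b3, b4⟩ := iboard ((n-4)^2/2 + (3*n-7) - i) (by omega)
      dsimp only
      omega
    · omega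
    · omega
    · omega
    · omega
    · omega
    · omega
    · -- (6,7)
      rw [pf_seg6 n i hn8 (by omega), pf_seg7 n j hn8 (by omega)]
      dsimp only
      omega
    · omega
    · omega
    · omega
    · omega
    · omega
    · omega
    · -- (7,7)
      rw [pf_seg7 n i hn8 (by omega), pf_seg7 n j hn8 (by omega)]
      dsimp only
      omega
  · -- board
    intro i hi
    rcases hseg i hi with h1|⟨h2a,h2b⟩|⟨h3a,h3b⟩|h4|⟨h5a,h5b⟩|h6|h7
    · rw [pf_seg1 n i hn8 (by omega)]; dsimp only; omega
    · rw [pf_seg2 n i hn8 (by omega) (by omega)]; dsimp only; omega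
    · rw [pf_seg3 n i hn8 (by omega) (by omega)]; dsimp only; omega
    · rw [pf_seg4 n i hn8 (by omega)]; dsimp only; omega
    · rw [pf_seg5 n i hn8 (by omega) (by omega)]
      obtain ⟨b1, b2, b3, b4⟩ := iboard ((n-4)^2/2 + (3*n-7) - i) (by omega)
      rw [hc4] at b2 b4
      dsimp only; omega
    · rw [pf_seg6 n i hn8 (by omega)]; dsimp only; omega
    · rw [pf_seg7 n i hn8 (by omega)]; dsimp only; omega
  · -- start
    rw [pf_seg1 n 0 hn8 (by omega)]
    norm_num
  · -- end
    rw [pf_seg7 n (n^2/2 - 1) hn8 (by omega)]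
    rw [Prod.ext_iff]
    constructor
    · dsimp only; omega
    · rfl
  · -- avoid
    intro i hi
    rcases hseg i hi with h1|⟨h2a,h2b⟩|⟨h3a,h3b⟩|h4|⟨h5a,h5b⟩|h6|h7
    · rw [pf_seg1 n i hn8 (by omega)]
      constructor <;> (simp only [ne_eq, Prod.mk.injEq]; omega)
    · rw [pf_seg2 n i hn8 (by omega) (by omega)]
      constructor <;> (simp only [ne_eq, Prod.mk.injEq]; omega)
    · rw [pf_seg3 n i hn8 (by omega) (by omega)]
      constructor <;> (simp only [ne_eq, Prod.mk.injEq]; omega)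
    · rw [pf_seg4 n i hn8 (by omega)]
      constructor <;> (simp only [ne_eq, Prod.mk.injEq]; omega)
    · rw [pf_seg5 n i hn8 (by omega) (by omega)]
      obtain ⟨b1, b2, b3, b4⟩ := iboard ((n-4)^2/2 + (3*n-7) - i) (by omega)
      constructor <;> (simp only [ne_eq, Prod.mk.injEq]; omega)
    · rw [pf_seg6 n i hn8 (by omega)]
      constructor <;> (simp only [ne_eq, Prod.mk.injEq]; omega)
    · rw [pf_seg7 n i hn8 (by omega)]
      constructor <;> (simp only [ne_eq, Prod.mk.injEq]; omega)


lemma spec_pf (n : ℕ) : Even n → 4 ≤ n → Spec n (pf n) := by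
  induction n using Nat.strong_induction_on with
  | _ n IH =>
    intro he h4
    rcases Nat.lt_or_ge n 8 with h8 | h8
    · obtain ⟨s, hs⟩ := he
      have hn46 : n = 4 ∨ n = 6 := by omega
      rcases hn46 with rfl | rfl
      · rw [pf4_eq]; exact spec4
      · rw [pf6_eq]; exact spec6
    · have he4 : Even (n-4) := by obtain ⟨s, hs⟩ := he; exact ⟨s-2, by omega⟩
      exact spec_step n h8 he (IH (n-4) (by omega) he4 (by omega))

/-- For every even positive integer n, the king graph on an n×n board
contains an induced path of length n²/2 − 1. -/
theorem king_even_lower (n : ℕ) (hn : Even n) (h0 : 0 < n) :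
    ∃ (a b : Cell) (p : (kingGraph n).Walk a b),
      IsSnake (kingGraph n) p ∧ p.length = n ^ 2 / 2 - 1 := by
  rcases Nat.lt_or_ge n 4 with h | h
  · have hn2 : n = 2 := by obtain ⟨s, hs⟩ := hn; omega
    subst hn2
    exact spec_to_snake 2 (by norm_num)
      (fun i => if i = 0 then ((0:ℤ),(0:ℤ)) else (0,1))
      (by decide) (by decide) (by decide)
  · obtain ⟨hchain, hfar, hboard, -, -, -⟩ := spec_pf n hn h
    exact spec_to_snake n (by omega) (pf n) hchain hfar hboard
end

section
/- For every odd positive integer n, the king graph on an n×n board contains an induced path of length (n² − 1)/2. Explicitly, with n = 2k−1, the set consisting of all cells (x,y) with 1 ≤ x ≤ n−2 and y even, together with (0,0), the cell (0,n−1) if k is even and (n−1,n−1) if k is odd, the cells (0,y) with y ≡ 3 (mod 4), and the cells (n−1,y) with y ≡ 1 (mod 4), is the vertex set of an induced path of length (n²−1)/2. -/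
open SimpleGraph

theorem walkOfFn {V : Type*} (G : SimpleGraph V) (f : ℕ → V) (L : ℕ)
    (h : ∀ i < L, G.Adj (f i) (f (i+1))) :
    ∃ p : G.Walk (f 0) (f L), p.support = (List.range (L+1)).map f ∧
      p.edges = (List.range L).map (fun i => s(f i, f (i+1))) := by
  induction L with
  | zero => exact ⟨.nil, by simp [List.range_succ], by simp⟩
  | succ L ih =>
    obtain ⟨p, hs, he⟩ := ih (fun i hi => h i (by omega))
    refine ⟨p.concat (h L (by omega)), ?_, ?_⟩
    · rw [Walk.support_concat, hs]; simp [List.range_succ]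
    · rw [Walk.edges_concat, he, List.range_succ]; simp

def gx (k q r : ℕ) : ℤ :=
  if r < 2*k-3 then (if q % 2 = 0 then (r:ℤ)+1 else 2*(k:ℤ)-3-(r:ℤ))
  else (if q % 2 = 0 then 2*(k:ℤ)-2 else 0)

def gy (k q r : ℕ) : ℤ :=
  if r < 2*k-3 then 2*(q:ℤ) else (if q = k-1 then 2*(k:ℤ)-2 else 2*(q:ℤ)+1)

def gcell (k q r : ℕ) : Cell := (gx k q r, gy k q r)

def fcell (k i : ℕ) : Cell :=
  if i = 0 then (0,0) else gcell k ((i-1)/(2*k-2)) ((i-1)%(2*k-2))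

lemma fcell_eq {k : ℕ} (hk : 2 ≤ k) (q r : ℕ) (hr : r < 2*k-2) :
    fcell k (q*(2*k-2)+r+1) = gcell k q r := by
  have h0 : 0 < 2*k-2 := by omega
  have h1 : q*(2*k-2)+r+1-1 = r + (2*k-2)*q := by
    have := Nat.mul_comm q (2*k-2); omega
  unfold fcell
  rw [if_neg (by omega), h1, Nat.add_mul_div_left _ _ h0, Nat.add_mul_mod_self_left,
    Nat.div_eq_of_lt hr, Nat.mod_eq_of_lt hr, Nat.zero_add]

lemma fcell_spec {k : ℕ} (hk : 2 ≤ k) (i : ℕ) (h1 : 1 ≤ i) (h2 : i ≤ k*(2*k-2)) :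
    ∃ q r, q ≤ k-1 ∧ r < 2*k-2 ∧ i = q*(2*k-2)+r+1 ∧ fcell k i = gcell k q r := by
  have h0 : 0 < 2*k-2 := by omega
  set q := (i-1)/(2*k-2) with hq
  set r := (i-1)%(2*k-2) with hr
  have hdm : (2*k-2) * q + r = i - 1 := Nat.div_add_mod _ _
  have hrlt : r < 2*k-2 := Nat.mod_lt _ h0
  have hcomm : (2*k-2) * q = q * (2*k-2) := Nat.mul_comm _ _
  have hi : i = q*(2*k-2)+r+1 := by omega
  have hqle : q ≤ k-1 := by
    by_contra hc
    have hkq : k ≤ q := by omega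
    have := Nat.mul_le_mul_right (2*k-2) hkq
    omega
  refine ⟨q, r, hqle, hrlt, hi, ?_⟩
  unfold fcell
  rw [if_neg (by omega)]

lemma mk_adj {k : ℕ} (hk : 2 ≤ k) (a b : Cell) (hne : a ≠ b)
    (ha : 0 ≤ a.1 ∧ a.1 ≤ 2*(k:ℤ)-2 ∧ 0 ≤ a.2 ∧ a.2 ≤ 2*(k:ℤ)-2)
    (hb : 0 ≤ b.1 ∧ b.1 ≤ 2*(k:ℤ)-2 ∧ 0 ≤ b.2 ∧ b.2 ≤ 2*(k:ℤ)-2)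
    (hd : -1 ≤ a.1-b.1 ∧ a.1-b.1 ≤ 1 ∧ -1 ≤ a.2-b.2 ∧ a.2-b.2 ≤ 1) :
    (kingGraph (2*k-1)).Adj a b := by
  have hcast : ((2*k-1 : ℕ) : ℤ) = 2*(k:ℤ)-1 := by
    push_cast [Nat.cast_sub (by omega : 1 ≤ 2*k)]; ring
  refine ⟨hne, ?_, ?_, ?_, ?_⟩
  · simp only [sqBoard, Set.mem_setOf_eq, hcast]; omega
  · simp only [sqBoard, Set.mem_setOf_eq, hcast]; omega
  · rw [abs_le]; omega
  · rw [abs_le]; omega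

lemma adj_first {k : ℕ} (hk : 2 ≤ k) :
    (kingGraph (2*k-1)).Adj ((0:ℤ),(0:ℤ)) (gcell k 0 0) := by
  refine mk_adj hk _ _ ?_ ?_ ?_ ?_ <;>
    (simp [gcell, gx, gy, Prod.ext_iff]; try split_ifs) <;> omega

lemma adj_g_succ {k : ℕ} (hk : 2 ≤ k) {q r : ℕ} (hq : q ≤ k-1) (hr : r+1 < 2*k-2) :
    (kingGraph (2*k-1)).Adj (gcell k q r) (gcell k q (r+1)) := by
  refine mk_adj hk _ _ ?_ ?_ ?_ ?_ <;>
    (simp [gcell, gx, gy, Prod.ext_iff]; try split_ifs) <;> omega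

lemma adj_g_row {k : ℕ} (hk : 2 ≤ k) {q : ℕ} (hq : q+1 ≤ k-1) :
    (kingGraph (2*k-1)).Adj (gcell k q (2*k-3)) (gcell k (q+1) 0) := by
  refine mk_adj hk _ _ ?_ ?_ ?_ ?_ <;>
    (simp [gcell, gx, gy, Prod.ext_iff]; try split_ifs) <;> omega

set_option maxHeartbeats 1000000 in
lemma gcell_consec {k : ℕ} (hk : 2 ≤ k) {q q' r r' : ℕ} (hq : q ≤ k-1) (hq' : q' ≤ k-1)
    (hr : r < 2*k-2) (hr' : r' < 2*k-2) (hlex : q < q' ∨ (q = q' ∧ r < r'))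
    (hadj : (kingGraph (2*k-1)).Adj (gcell k q r) (gcell k q' r')) :
    (q' = q ∧ r' = r+1) ∨ (q' = q+1 ∧ r = 2*k-3 ∧ r' = 0) := by
  obtain ⟨hne, -, -, hx, hy⟩ := hadj
  rw [abs_le] at hx hy
  rw [Ne, Prod.ext_iff] at hne
  simp only [gcell, Prod.fst, Prod.snd] at hne hx hy
  unfold gx at hne hx
  unfold gy at hne hy
  split_ifs at hne hx hy <;> omega

set_option maxHeartbeats 1000000 in
lemma gcell_inj {k : ℕ} (hk : 2 ≤ k) {q q' r r' : ℕ} (hq : q ≤ k-1) (hq' : q' ≤ k-1)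
    (hr : r < 2*k-2) (hr' : r' < 2*k-2) (h : gcell k q r = gcell k q' r') :
    q = q' ∧ r = r' := by
  rw [Prod.ext_iff] at h
  simp only [gcell, Prod.fst, Prod.snd] at h
  unfold gx gy at h
  split_ifs at h <;> omega

lemma gcell_ne_origin {k : ℕ} (hk : 2 ≤ k) {q r : ℕ} (hq : q ≤ k-1) (hr : r < 2*k-2) :
    gcell k q r ≠ ((0:ℤ),(0:ℤ)) := by
  rw [Ne, Prod.ext_iff]
  simp only [gcell, Prod.fst, Prod.snd]
  unfold gx gy
  split_ifs <;> omega

lemma adj_origin {k : ℕ} (hk : 2 ≤ k) {q r : ℕ} (hq : q ≤ k-1) (hr : r < 2*k-2)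
    (h : (kingGraph (2*k-1)).Adj ((0:ℤ),(0:ℤ)) (gcell k q r)) : q = 0 ∧ r = 0 := by
  obtain ⟨-, -, -, hx, hy⟩ := h
  rw [abs_le] at hx hy
  simp only [gcell, Prod.fst, Prod.snd] at hx hy
  unfold gx at hx
  unfold gy at hy
  split_ifs at hx hy <;> omega
lemma fcell_adj {k : ℕ} (hk : 2 ≤ k) : ∀ i < k*(2*k-2),
    (kingGraph (2*k-1)).Adj (fcell k i) (fcell k (i+1)) := by
  intro i hi
  rcases Nat.eq_zero_or_pos i with rfl | hpos
  · have h1 : fcell k 1 = gcell k 0 0 := by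
      have h := fcell_eq hk 0 0 (by omega); simpa using h
    have h0 : fcell k 0 = ((0:ℤ),(0:ℤ)) := rfl
    rw [h0, h1]; exact adj_first hk
  · obtain ⟨q, r, hq, hr, hieq, hfe⟩ := fcell_spec hk i hpos (by omega)
    by_cases hc : r + 1 < 2*k-2
    · have h2 : i+1 = q*(2*k-2)+(r+1)+1 := by omega
      rw [hfe, h2, fcell_eq hk q (r+1) hc]
      exact adj_g_succ hk hq hc
    · have hr3 : r = 2*k-3 := by omega
      have hmul : (q+1)*(2*k-2) = q*(2*k-2)+(2*k-2) := by ring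
      have hq1 : q+1 ≤ k-1 := by
        by_contra hcc
        have hkq : k ≤ q+1 := by omega
        have h5 := Nat.mul_le_mul_right (2*k-2) hkq
        omega
      have h2 : i+1 = (q+1)*(2*k-2)+0+1 := by omega
      rw [hfe, hr3, h2, fcell_eq hk (q+1) 0 (by omega)]
      exact adj_g_row hk hq1

lemma fcell_consec {k : ℕ} (hk : 2 ≤ k) {i j : ℕ} (hij : i < j) (hj : j ≤ k*(2*k-2))
    (hadj : (kingGraph (2*k-1)).Adj (fcell k i) (fcell k j)) : j = i+1 := by
  obtain ⟨q', r', hq', hr', hjeq, hfj⟩ := fcell_spec hk j (by omega) hj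
  rcases Nat.eq_zero_or_pos i with rfl | hpos
  · have h0 : fcell k 0 = ((0:ℤ),(0:ℤ)) := rfl
    rw [h0, hfj] at hadj
    obtain ⟨hq0, hr0⟩ := adj_origin hk hq' hr' hadj
    subst hq0; subst hr0; omega
  · obtain ⟨q, r, hq, hr, hieq, hfi⟩ := fcell_spec hk i hpos (by omega)
    rw [hfi, hfj] at hadj
    have hlex : q < q' ∨ (q = q' ∧ r < r') := by
      rcases Nat.lt_trichotomy q q' with h | h | h
      · exact Or.inl h
      · subst h; exact Or.inr ⟨rfl, by omega⟩
      · exfalso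
        have h5 := Nat.mul_le_mul_right (2*k-2) (Nat.succ_le_of_lt h)
        have h6 : q'.succ*(2*k-2) = q'*(2*k-2)+(2*k-2) := Nat.succ_mul _ _
        omega
    rcases gcell_consec hk hq hq' hr hr' hlex hadj with ⟨h1, h2⟩ | ⟨h1, h2, h3⟩
    · subst h1; omega
    · have h6 : (q+1)*(2*k-2) = q*(2*k-2)+(2*k-2) := by ring
      rw [h1] at hjeq; omega

lemma fcell_inj {k : ℕ} (hk : 2 ≤ k) {i j : ℕ} (hi : i ≤ k*(2*k-2)) (hj : j ≤ k*(2*k-2))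
    (h : fcell k i = fcell k j) : i = j := by
  rcases Nat.eq_zero_or_pos i with rfl | hip <;> rcases Nat.eq_zero_or_pos j with rfl | hjp
  · rfl
  · obtain ⟨q,r,hq,hr,hjeq,hfj⟩ := fcell_spec hk j hjp hj
    rw [hfj] at h
    exact absurd h.symm (gcell_ne_origin hk hq hr)
  · obtain ⟨q,r,hq,hr,hieq,hfi⟩ := fcell_spec hk i hip hi
    rw [hfi] at h
    exact absurd h (gcell_ne_origin hk hq hr)
  · obtain ⟨q,r,hq,hr,hieq,hfi⟩ := fcell_spec hk i hip hi
    obtain ⟨q',r',hq',hr',hjeq,hfj⟩ := fcell_spec hk j hjp hj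
    rw [hfi, hfj] at h
    obtain ⟨e1, e2⟩ := gcell_inj hk hq hq' hr hr' h
    subst e1; subst e2; omega

set_option maxHeartbeats 2000000 in
lemma image_char {k : ℕ} (hk : 2 ≤ k) (v : Cell) :
    (v = ((0:ℤ),(0:ℤ)) ∨ ∃ q r, q ≤ k-1 ∧ r < 2*k-2 ∧ v = gcell k q r) ↔
      ((1 ≤ v.1 ∧ v.1 ≤ ((2*k-1 : ℕ) : ℤ) - 2 ∧ 0 ≤ v.2 ∧ v.2 ≤ ((2*k-1 : ℕ) : ℤ) - 1 ∧ Even v.2) ∨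
       v = (0, 0) ∨
       (Even k ∧ v = (0, ((2*k-1 : ℕ) : ℤ) - 1)) ∨
       (Odd k ∧ v = (((2*k-1 : ℕ) : ℤ) - 1, ((2*k-1 : ℕ) : ℤ) - 1)) ∨
       (v.1 = 0 ∧ 0 ≤ v.2 ∧ v.2 ≤ ((2*k-1 : ℕ) : ℤ) - 1 ∧ v.2 % 4 = 3) ∨
       (v.1 = ((2*k-1 : ℕ) : ℤ) - 1 ∧ 0 ≤ v.2 ∧ v.2 ≤ ((2*k-1 : ℕ) : ℤ) - 1 ∧ v.2 % 4 = 1)) := by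
  constructor
  · rintro (rfl | ⟨q, r, hq, hr, rfl⟩)
    · exact Or.inr (Or.inl rfl)
    · simp only [gcell, Prod.ext_iff, Prod.fst, Prod.snd, Int.even_iff, Nat.even_iff,
        Nat.odd_iff]
      unfold gx gy
      split_ifs <;> omega
  · rintro (⟨h1,h2,h3,h4,h5⟩ | rfl | ⟨hek, rfl⟩ | ⟨hok, rfl⟩ | ⟨h1,h2,h3,h4⟩ | ⟨h1,h2,h3,h4⟩)
    · right
      rw [Int.even_iff] at h5
      rcases Nat.mod_two_eq_zero_or_one (v.2.toNat / 2) with hpar | hpar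
      · refine ⟨v.2.toNat / 2, v.1.toNat - 1, by omega, by omega, ?_⟩
        have hrc : v.1.toNat - 1 < 2*k-3 := by omega
        rw [Prod.ext_iff]
        simp only [gcell, Prod.fst, Prod.snd]
        unfold gx gy
        rw [if_pos hrc, if_pos hpar, if_pos hrc]
        constructor <;> omega
      · refine ⟨v.2.toNat / 2, 2*k-3 - v.1.toNat, by omega, by omega, ?_⟩
        have hrc : 2*k-3 - v.1.toNat < 2*k-3 := by omega
        rw [Prod.ext_iff]
        simp only [gcell, Prod.fst, Prod.snd]
        unfold gx gy
        rw [if_pos hrc, if_neg (by omega : ¬(v.2.toNat / 2 % 2 = 0)), if_pos hrc]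
        constructor <;> omega
    · exact Or.inl rfl
    · right
      rw [Nat.even_iff] at hek
      refine ⟨k-1, 2*k-3, by omega, by omega, ?_⟩
      rw [Prod.ext_iff]
      simp only [gcell, Prod.fst, Prod.snd]
      unfold gx gy
      split_ifs <;> omega
    · right
      rw [Nat.odd_iff] at hok
      refine ⟨k-1, 2*k-3, by omega, by omega, ?_⟩
      rw [Prod.ext_iff]
      simp only [gcell, Prod.fst, Prod.snd]
      unfold gx gy
      split_ifs <;> omega
    · right
      refine ⟨v.2.toNat / 2, 2*k-3, by omega, by omega, ?_⟩
      rw [Prod.ext_iff]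
      simp only [gcell, Prod.fst, Prod.snd]
      unfold gx gy
      split_ifs <;> omega
    · right
      refine ⟨v.2.toNat / 2, 2*k-3, by omega, by omega, ?_⟩
      rw [Prod.ext_iff]
      simp only [gcell, Prod.fst, Prod.snd]
      unfold gx gy
      split_ifs <;> omega
/-- explicit maximum-length induced path in the king graph on an odd board. -/
theorem king_odd_lower (k n : ℕ) (hk : 0 < k) (hn : n = 2 * k - 1) :
    ∃ (a b : Cell) (p : (kingGraph n).Walk a b),
      IsSnake (kingGraph n) p ∧ p.length = (n ^ 2 - 1) / 2 ∧
      {v : Cell | v ∈ p.support} =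
        {v : Cell |
          (1 ≤ v.1 ∧ v.1 ≤ (n : ℤ) - 2 ∧ 0 ≤ v.2 ∧ v.2 ≤ (n : ℤ) - 1 ∧ Even v.2) ∨
          v = (0, 0) ∨
          (Even k ∧ v = (0, (n : ℤ) - 1)) ∨
          (Odd k ∧ v = ((n : ℤ) - 1, (n : ℤ) - 1)) ∨
          (v.1 = 0 ∧ 0 ≤ v.2 ∧ v.2 ≤ (n : ℤ) - 1 ∧ v.2 % 4 = 3) ∨
          (v.1 = (n : ℤ) - 1 ∧ 0 ≤ v.2 ∧ v.2 ≤ (n : ℤ) - 1 ∧ v.2 % 4 = 1)} := by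
  subst hn
  rcases eq_or_lt_of_le (by omega : 1 ≤ k) with h1 | hk2
  · -- k = 1
    obtain rfl : k = 1 := h1.symm
    refine ⟨((0:ℤ),(0:ℤ)), ((0:ℤ),(0:ℤ)), .nil, ⟨Walk.IsPath.nil, ?_⟩, by norm_num, ?_⟩
    · intro u hu v hv hadj
      simp only [Walk.support_nil, List.mem_singleton] at hu hv
      subst hu; subst hv
      exact absurd rfl hadj.ne
    · ext v
      simp only [Set.mem_setOf_eq, Walk.support_nil, List.mem_singleton]
      constructor
      · rintro rfl
        exact Or.inr (Or.inl rfl)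
      · rintro (⟨a1,a2,a3,a4,a5⟩ | rfl | ⟨he,rfl⟩ | ⟨ho,rfl⟩ | ⟨a1,a2,a3,a4⟩ | ⟨a1,a2,a3,a4⟩)
        · exfalso; omega
        · rfl
        · exfalso; rw [Nat.even_iff] at he; omega
        · rw [Prod.ext_iff]; constructor <;> simp
        · exfalso; omega
        · exfalso; omega
  · -- 2 ≤ k
    obtain ⟨p, hs, he⟩ := walkOfFn (kingGraph (2*k-1)) (fcell k) (k*(2*k-2)) (fcell_adj hk2)
    refine ⟨fcell k 0, fcell k (k*(2*k-2)), p, ⟨?_, ?_⟩, ?_, ?_⟩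
    · apply Walk.IsPath.mk'
      rw [hs]
      refine List.Nodup.map_on ?_ (List.nodup_range (n := _))
      intro x hx y hy hxy
      rw [List.mem_range] at hx hy
      exact fcell_inj hk2 (by omega) (by omega) hxy
    · intro u hu v hv hadj
      rw [hs, List.mem_map] at hu hv
      obtain ⟨i, hi, rfl⟩ := hu; obtain ⟨j, hj, rfl⟩ := hv
      rw [List.mem_range] at hi hj
      rcases Nat.lt_trichotomy i j with hij | rfl | hij
      · have h1 : j = i+1 := fcell_consec hk2 hij (by omega) hadj
        subst h1
        rw [he, List.mem_map]
        exact ⟨i, List.mem_range.mpr (by omega), rfl⟩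
      · exact absurd rfl hadj.ne
      · have h1 : i = j+1 := fcell_consec hk2 hij (by omega) hadj.symm
        subst h1
        rw [he, List.mem_map]
        exact ⟨j, List.mem_range.mpr (by omega), Sym2.eq_swap⟩
    · have hlen : p.support.length = p.length + 1 := Walk.length_support p
      rw [hs, List.length_map, List.length_range] at hlen
      obtain ⟨a, rfl⟩ : ∃ a, k = a+2 := ⟨k-2, by omega⟩
      have e1 : 2*(a+2)-1 = 2*a+3 := by omega
      have e2 : (2*a+3)^2 = 4*(a*a) + 12*a + 9 := by ring
      have e3 : (a+2)*(2*(a+2)-2) = 2*(a*a) + 6*a + 4 := by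
        have e4 : 2*(a+2)-2 = 2*a+2 := by omega
        rw [e4]; ring
      have e5 : (2*(a+2)-1)^2 = (2*a+3)^2 := by rw [e1]
      omega
    · ext v
      simp only [Set.mem_setOf_eq]
      rw [hs, List.mem_map]
      constructor
      · rintro ⟨i, hi, rfl⟩
        rw [List.mem_range] at hi
        rcases Nat.eq_zero_or_pos i with rfl | hip
        · exact (image_char hk2 _).mp (Or.inl rfl)
        · obtain ⟨q,r,hq,hr,hieq,hfe⟩ := fcell_spec hk2 i hip (by omega)
          rw [hfe]
          exact (image_char hk2 _).mp (Or.inr ⟨q,r,hq,hr,rfl⟩)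
      · intro hv
        rcases (image_char hk2 v).mpr hv with rfl | ⟨q,r,hq,hr,rfl⟩
        · exact ⟨0, List.mem_range.mpr (by omega), rfl⟩
        · refine ⟨q*(2*k-2)+r+1, List.mem_range.mpr ?_, (fcell_eq hk2 q r hr).symm ▸ rfl⟩
          have h5 := Nat.mul_le_mul_right (2*k-2) (show q+1 ≤ k by omega)
          have h6 : (q+1)*(2*k-2) = q*(2*k-2)+(2*k-2) := by ring
          omega
end

section
/- Call a cell (x,y) of the odd board odd if both x and y are odd, and call an edge of the king graph regular if neither endpoint is odd. For any little block B (a triangle on cells a, a+(0,1), a+(1,0), a+(1,1) with the three mutual edges among a, a+(0,1), a+(1,0)), and any induced path P in the king graph, the number of odd cells of B visited by P plus the number of the three regular edges of B traversed by P is at most 1. -/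
open SimpleGraph

lemma no_triangle_s5 {V : Type*} {G : SimpleGraph V} {a b : V} (p : G.Walk a b)
    (hp : p.IsPath) {x y z : V} (hxy : s(x,y) ∈ p.edges) (hyz : s(y,z) ∈ p.edges)
    (hxz : s(x,z) ∈ p.edges) : False := by
  have nxy : x ≠ y := (p.adj_of_mem_edges hxy).ne
  have nyz : y ≠ z := (p.adj_of_mem_edges hyz).ne
  have nxz : x ≠ z := (p.adj_of_mem_edges hxz).ne
  induction p with
  | nil => simp at hxy
  | @cons u c b h q ih =>
    rw [SimpleGraph.Walk.cons_isPath_iff] at hp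
    rw [SimpleGraph.Walk.edges_cons, List.mem_cons] at hxy hyz hxz
    obtain ⟨hq, hu⟩ := hp
    rcases hxy with hxy | hxy
    · rw [Sym2.eq_iff] at hxy
      rcases hxy with ⟨rfl, rfl⟩ | ⟨rfl, rfl⟩
      · rcases hxz with hxz | hxz
        · rw [Sym2.eq_iff] at hxz; tauto
        · exact hu (q.fst_mem_support_of_mem_edges hxz)
      · rcases hyz with hyz | hyz
        · rw [Sym2.eq_iff] at hyz; tauto
        · exact hu (q.fst_mem_support_of_mem_edges hyz)
    · rcases hyz with hyz | hyz
      · rw [Sym2.eq_iff] at hyz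
        rcases hyz with ⟨rfl, rfl⟩ | ⟨rfl, rfl⟩
        · exact hu (q.snd_mem_support_of_mem_edges hxy)
        · rcases hxz with hxz | hxz
          · rw [Sym2.eq_iff] at hxz; tauto
          · exact hu (q.snd_mem_support_of_mem_edges hxz)
      · rcases hxz with hxz | hxz
        · rw [Sym2.eq_iff] at hxz
          rcases hxz with ⟨rfl, rfl⟩ | ⟨rfl, rfl⟩
          · exact hu (q.fst_mem_support_of_mem_edges hxy)
          · exact hu (q.snd_mem_support_of_mem_edges hyz)
        · exact ih hq hxy hyz hxz

/-- for a little block at a = (z,z) (z even), the number of odd cells of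
the block visited by an induced path plus the number of its three regular edges
traversed is at most 1. -/
theorem king_little_block (n : ℕ) (hn : Odd n) (z : ℤ) (hz : Even z)
    (hz0 : 0 ≤ z) (hz1 : z + 1 ≤ (n : ℤ) - 1)
    {a b : Cell} (p : (kingGraph n).Walk a b) (hp : IsSnake (kingGraph n) p) :
    ((if ((z + 1, z + 1) : Cell) ∈ p.support then 1 else 0) +
     ((if s(((z, z) : Cell), ((z, z + 1) : Cell)) ∈ p.edges then 1 else 0) +
      (if s(((z, z) : Cell), ((z + 1, z) : Cell)) ∈ p.edges then 1 else 0) +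
      (if s(((z, z + 1) : Cell), ((z + 1, z) : Cell)) ∈ p.edges then 1 else 0)) : ℕ) ≤ 1 := by
  set A : Cell := (z, z) with hA
  set B : Cell := (z, z + 1) with hB
  set C : Cell := (z + 1, z) with hC
  set O : Cell := (z + 1, z + 1) with hO
  have hbA : A ∈ sqBoard n := ⟨hz0, by dsimp [A]; omega, hz0, by dsimp [A]; omega⟩
  have hbB : B ∈ sqBoard n := ⟨hz0, by dsimp [B]; omega, by dsimp [B]; omega, by dsimp [B]; omega⟩
  have hbC : C ∈ sqBoard n := ⟨by dsimp [C]; omega, by dsimp [C]; omega, hz0, by dsimp [C]; omega⟩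
  have hbO : O ∈ sqBoard n := ⟨by dsimp [O]; omega, by dsimp [O]; omega, by dsimp [O]; omega, by dsimp [O]; omega⟩
  have adj : ∀ u v : Cell, u ∈ sqBoard n → v ∈ sqBoard n → u ≠ v →
      |u.1 - v.1| ≤ 1 → |u.2 - v.2| ≤ 1 → (kingGraph n).Adj u v :=
    fun u v h1 h2 h3 h4 h5 => ⟨h3, h1, h2, h4, h5⟩
  have aAB : (kingGraph n).Adj A B := adj _ _ hbA hbB (by simp [hA, hB] <;> omega) (by simp [hA, hB]) (by simp [hA, hB])
  have aAC : (kingGraph n).Adj A C := adj _ _ hbA hbC (by simp [hA, hC] <;> omega) (by simp [hA, hC]) (by simp [hA, hC])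
  have aBC : (kingGraph n).Adj B C := adj _ _ hbB hbC (by simp [hB, hC] <;> omega) (by simp [hB, hC]) (by simp [hB, hC] <;> omega)
  have aOA : (kingGraph n).Adj O A := adj _ _ hbO hbA (by simp [hO, hA] <;> omega) (by simp [hO, hA]) (by simp [hO, hA])
  have aOB : (kingGraph n).Adj O B := adj _ _ hbO hbB (by simp [hO, hB] <;> omega) (by simp [hO, hB]) (by simp [hO, hB])
  have aOC : (kingGraph n).Adj O C := adj _ _ hbO hbC (by simp [hO, hC] <;> omega) (by simp [hO, hC]) (by simp [hO, hC])
  obtain ⟨hpath, hind⟩ := hp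
  -- pairwise exclusions
  have h12 : ¬(s(A,B) ∈ p.edges ∧ s(A,C) ∈ p.edges) := by
    rintro ⟨h1, h2⟩
    have hB' := p.snd_mem_support_of_mem_edges h1
    have hC' := p.snd_mem_support_of_mem_edges h2
    exact no_triangle_s5 p hpath h1 (hind B hB' C hC' aBC) h2
  have h13 : ¬(s(A,B) ∈ p.edges ∧ s(B,C) ∈ p.edges) := by
    rintro ⟨h1, h3⟩
    have hA' := p.fst_mem_support_of_mem_edges h1
    have hC' := p.snd_mem_support_of_mem_edges h3
    exact no_triangle_s5 p hpath h1 h3 (hind A hA' C hC' aAC)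
  have h23 : ¬(s(A,C) ∈ p.edges ∧ s(B,C) ∈ p.edges) := by
    rintro ⟨h2, h3⟩
    have hA' := p.fst_mem_support_of_mem_edges h2
    have hB' := p.fst_mem_support_of_mem_edges h3
    exact no_triangle_s5 p hpath (hind A hA' B hB' aAB) h3 h2
  have h01 : ¬(O ∈ p.support ∧ s(A,B) ∈ p.edges) := by
    rintro ⟨h0, h1⟩
    have hA' := p.fst_mem_support_of_mem_edges h1
    have hB' := p.snd_mem_support_of_mem_edges h1
    exact no_triangle_s5 p hpath (hind O h0 A hA' aOA) h1 (hind O h0 B hB' aOB)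
  have h02 : ¬(O ∈ p.support ∧ s(A,C) ∈ p.edges) := by
    rintro ⟨h0, h2⟩
    have hA' := p.fst_mem_support_of_mem_edges h2
    have hC' := p.snd_mem_support_of_mem_edges h2
    exact no_triangle_s5 p hpath (hind O h0 A hA' aOA) h2 (hind O h0 C hC' aOC)
  have h03 : ¬(O ∈ p.support ∧ s(B,C) ∈ p.edges) := by
    rintro ⟨h0, h3⟩
    have hB' := p.fst_mem_support_of_mem_edges h3
    have hC' := p.snd_mem_support_of_mem_edges h3
    exact no_triangle_s5 p hpath (hind O h0 B hB' aOB) h3 (hind O h0 C hC' aOC)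
  split_ifs <;> (try norm_num) <;>
    first
      | exact (h12 ⟨‹_›, ‹_›⟩).elim
      | exact (h13 ⟨‹_›, ‹_›⟩).elim
      | exact (h23 ⟨‹_›, ‹_›⟩).elim
      | exact (h01 ⟨‹_›, ‹_›⟩).elim
      | exact (h02 ⟨‹_›, ‹_›⟩).elim
      | exact (h03 ⟨‹_›, ‹_›⟩).elim
end

section
/- Let n = 2k−1 be odd and let ρ be a Hamiltonian path in the k×k grid graph making t turns. Then the path ψ(ρ) in the n×n king graph, obtained by scaling ρ up by a factor of two (replacing each edge a'a'' of ρ by the path 2a' — (a'+a'') — 2a'') and smoothing each turn a'—b—a'' (replacing (a'+b) — 2b — (b+a'') by the single edge (a'+b) — (b+a'')), is an induced path in the king graph of length 2(k²−1) − t. -/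
open SimpleGraph

set_option linter.unusedVariables false
set_option linter.unreachableTactic false
set_option linter.unusedTactic false
namespace PsiSnake
open SimpleGraph Walk

def dbl (a : Cell) : Cell := (2*a.1, 2*a.2)
def mid (a c : Cell) : Cell := (a.1+c.1, a.2+c.2)

def Perp (a c d : Cell) : Prop := (a.2 = c.2 ∧ d.1 = c.1) ∨ (a.1 = c.1 ∧ d.2 = c.2)

instance (a c d : Cell) : Decidable (Perp a c d) := by unfold Perp; infer_instance

lemma perp_comm {a c d : Cell} : Perp a c d ↔ Perp d c a := by
  unfold Perp; tauto

lemma mid_comm (a c : Cell) : mid a c = mid c a := by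
  simp [mid, Prod.ext_iff]; omega

lemma abs_add_one {x y : ℤ} (h : |x| + |y| = 1) :
    (x = 1 ∧ y = 0) ∨ (x = -1 ∧ y = 0) ∨ (x = 0 ∧ y = 1) ∨ (x = 0 ∧ y = -1) := by
  rcases abs_cases x with ⟨h1, _⟩ | ⟨h1, _⟩ <;> rcases abs_cases y with ⟨h2, _⟩ | ⟨h2, _⟩ <;> omega

lemma grid_adj {m n : ℕ} {a c : Cell} (h : (gridGraph m n).Adj a c) :
    a ∈ board m n ∧ c ∈ board m n ∧ |a.1 - c.1| + |a.2 - c.2| = 1 := h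

lemma grid_adj_cases {m n : ℕ} {a c : Cell} (h : (gridGraph m n).Adj a c) :
    (a.1 - c.1 = 1 ∧ a.2 = c.2) ∨ (a.1 - c.1 = -1 ∧ a.2 = c.2) ∨
    (a.1 = c.1 ∧ a.2 - c.2 = 1) ∨ (a.1 = c.1 ∧ a.2 - c.2 = -1) := by
  have := abs_add_one h.2.2
  omega

variable {k n : ℕ}

lemma mem_sqB (hk : 0 < k) (hn : n = 2*k-1) {w : Cell}
    (h1 : 0 ≤ w.1) (h2 : w.1 ≤ 2*(k:ℤ)-2) (h3 : 0 ≤ w.2) (h4 : w.2 ≤ 2*(k:ℤ)-2) :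
    w ∈ sqBoard n := ⟨h1, by omega, h3, by omega⟩

lemma dbl_mem (hk : 0 < k) (hn : n = 2*k-1) {a : Cell} (h : a ∈ board k k) :
    dbl a ∈ sqBoard n := by
  obtain ⟨h1, h2, h3, h4⟩ := h
  exact mem_sqB hk hn (by simp [dbl]; omega) (by simp [dbl]; omega)
    (by simp [dbl]; omega) (by simp [dbl]; omega)

lemma mid_mem (hk : 0 < k) (hn : n = 2*k-1) {a c : Cell}
    (ha : a ∈ board k k) (hc : c ∈ board k k) : mid a c ∈ sqBoard n := by
  obtain ⟨h1, h2, h3, h4⟩ := ha; obtain ⟨h5, h6, h7, h8⟩ := hc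
  exact mem_sqB hk hn (by simp [mid]; omega) (by simp [mid]; omega)
    (by simp [mid]; omega) (by simp [mid]; omega)

lemma adjA (hk : 0 < k) (hn : n = 2*k-1) {a c : Cell} (h : (gridGraph k k).Adj a c) :
    (kingGraph n).Adj (dbl a) (mid a c) := by
  obtain ⟨ha, hc, habs⟩ := h
  have h4 := abs_add_one habs
  refine ⟨?_, dbl_mem hk hn ha, mid_mem hk hn ha hc, ?_, ?_⟩
  · intro he; rw [Prod.ext_iff] at he; simp [dbl, mid] at he; omega
  · rw [abs_le]; simp [dbl, mid]; omega
  · rw [abs_le]; simp [dbl, mid]; omega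

lemma adjB (hk : 0 < k) (hn : n = 2*k-1) {a c : Cell} (h : (gridGraph k k).Adj a c) :
    (kingGraph n).Adj (mid a c) (dbl c) := by
  obtain ⟨ha, hc, habs⟩ := h
  have h4 := abs_add_one habs
  refine ⟨?_, mid_mem hk hn ha hc, dbl_mem hk hn hc, ?_, ?_⟩
  · intro he; rw [Prod.ext_iff] at he; simp [dbl, mid] at he; omega
  · rw [abs_le]; simp [dbl, mid]; omega
  · rw [abs_le]; simp [dbl, mid]; omega

lemma adjD (hk : 0 < k) (hn : n = 2*k-1) {a c d : Cell} (h1 : (gridGraph k k).Adj a c)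
    (h2 : (gridGraph k k).Adj c d) (hp : Perp a c d) :
    (kingGraph n).Adj (mid a c) (mid c d) := by
  obtain ⟨ha, hc, habs⟩ := h1
  obtain ⟨-, hd, habs'⟩ := h2
  have h4 := abs_add_one habs
  have h5 := abs_add_one habs'
  obtain hp | hp := hp
  all_goals {
    refine ⟨?_, mid_mem hk hn ha hc, mid_mem hk hn hc hd, ?_, ?_⟩
    · intro he; rw [Prod.ext_iff] at he; simp [mid] at he; omega
    · rw [abs_le]; simp [mid]; omega
    · rw [abs_le]; simp [mid]; omega }

def seg (hk : 0 < k) (hn : n = 2*k-1) :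
    ∀ {c b : Cell} (a : Cell), (gridGraph k k).Adj a c → (q : (gridGraph k k).Walk c b) →
      (kingGraph n).Walk (mid a c) (dbl b)
  | _, _, _, hac, .nil => Walk.cons (adjB hk hn hac) Walk.nil
  | c, b, a, hac, @Walk.cons _ _ _ d _ hcd q' =>
    if h : Perp a c d then Walk.cons (adjD hk hn hac hcd h) (seg hk hn c hcd q')
    else Walk.cons (adjB hk hn hac) (Walk.cons (adjA hk hn hcd) (seg hk hn c hcd q'))

def psi (hk : 0 < k) (hn : n = 2*k-1) :
    ∀ {a b : Cell}, (gridGraph k k).Walk a b → (kingGraph n).Walk (dbl a) (dbl b)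
  | _, _, .nil => .nil
  | _, _, .cons hac q => .cons (adjA hk hn hac) (seg hk hn _ hac q)

def tla : ∀ {c b : Cell} (_ : Cell), (gridGraph k k).Walk c b → List Cell
  | _, _, _, .nil => []
  | c, _, a, @Walk.cons _ _ _ d _ _ q' => (if Perp a c d then [c] else []) ++ tla c q'

def turnList : ∀ {a b : Cell}, (gridGraph k k).Walk a b → List Cell
  | _, _, .nil => []
  | _, _, @Walk.cons _ _ a _ _ _ q => tla a q


variable {k n : ℕ}

lemma seg_nil (hk : 0 < k) (hn : n = 2*k-1) {a c : Cell} (hac : (gridGraph k k).Adj a c) :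
    seg hk hn a hac .nil = Walk.cons (adjB hk hn hac) .nil := rfl

lemma seg_cons (hk : 0 < k) (hn : n = 2*k-1) {a c d b : Cell} (hac : (gridGraph k k).Adj a c)
    (hcd : (gridGraph k k).Adj c d) (q' : (gridGraph k k).Walk d b) :
    seg hk hn a hac (.cons hcd q') =
      if h : Perp a c d then .cons (adjD hk hn hac hcd h) (seg hk hn c hcd q')
      else .cons (adjB hk hn hac) (.cons (adjA hk hn hcd) (seg hk hn c hcd q')) := rfl

lemma tla_nil {a c : Cell} : tla (k := k) a (.nil (u := c)) = [] := rfl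

lemma tla_cons {a c d b : Cell} (hcd : (gridGraph k k).Adj c d) (q' : (gridGraph k k).Walk d b) :
    tla a (.cons hcd q') = (if Perp a c d then [c] else []) ++ tla c q' := rfl

lemma seg_len (hk : 0 < k) (hn : n = 2*k-1) :
    ∀ {c b : Cell} (a : Cell) (hac : (gridGraph k k).Adj a c) (q : (gridGraph k k).Walk c b),
      (seg hk hn a hac q).length + (tla a q).length = 1 + 2 * q.length
  | _, _, a, hac, .nil => by simp [seg_nil, tla_nil]
  | c, b, a, hac, @Walk.cons _ _ _ d _ hcd q' => by
    have IH := seg_len hk hn c hcd q'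
    rw [seg_cons, tla_cons]
    split_ifs with h <;> simp_all <;> omega

lemma tla_sublist : ∀ {c b : Cell} (a : Cell) (q : (gridGraph k k).Walk c b),
    (tla a q).Sublist q.support
  | _, _, a, .nil => by simp [tla_nil]
  | c, b, a, @Walk.cons _ _ _ d _ hcd q' => by
    have IH := tla_sublist c q'
    rw [tla_cons, Walk.support_cons]
    split_ifs with h
    · simpa using IH.cons₂ c
    · simpa using IH.cons c

lemma first_edge {G' : SimpleGraph Cell} {u b v : Cell} (q : G'.Walk u b) (hq : q.IsPath)
    (h : s(u, v) ∈ q.edges) : ∃ t, q.support = u :: v :: t := by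
  cases q with
  | nil => simp at h
  | cons h' q' =>
    rw [Walk.edges_cons, List.mem_cons] at h
    rcases h with h | h
    · rw [Sym2.eq_iff] at h
      rcases h with ⟨-, rfl⟩ | ⟨h1, -⟩
      · exact ⟨q'.support.tail, by rw [Walk.support_cons]; congr 1; exact q'.support_eq_cons⟩
      · exact absurd h1 h'.ne
    · exact absurd (q'.fst_mem_support_of_mem_edges h)
        ((Walk.cons_isPath_iff h' q').mp hq).2

lemma edge_in {G' : SimpleGraph Cell} {a b x y : Cell} (p : G'.Walk a b)
    (h : s(x, y) ∈ p.edges) :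
    ∃ l1 l2, p.support = l1 ++ x :: y :: l2 ∨ p.support = l1 ++ y :: x :: l2 := by
  induction p with
  | nil => simp at h
  | @cons a a' b h' q IH =>
    rw [Walk.edges_cons, List.mem_cons] at h
    rcases h with h | h
    · rw [Sym2.eq_iff] at h
      rcases h with ⟨rfl, rfl⟩ | ⟨rfl, rfl⟩
      · exact ⟨[], q.support.tail, Or.inl (by rw [Walk.support_cons, q.support_eq_cons]; rfl)⟩
      · exact ⟨[], q.support.tail, Or.inr (by rw [Walk.support_cons, q.support_eq_cons]; rfl)⟩
    · obtain ⟨l1, l2, hh | hh⟩ := IH h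
      · exact ⟨a :: l1, l2, Or.inl (by rw [Walk.support_cons, hh]; rfl)⟩
      · exact ⟨a :: l1, l2, Or.inr (by rw [Walk.support_cons, hh]; rfl)⟩

lemma two_edges {G' : SimpleGraph Cell} {a b x c y : Cell} (p : G'.Walk a b) (hp : p.IsPath)
    (hx : s(x, c) ∈ p.edges) (hy : s(c, y) ∈ p.edges) (hxy : x ≠ y) :
    ∃ l1 l2, p.support = l1 ++ x :: c :: y :: l2 ∨ p.support = l1 ++ y :: c :: x :: l2 := by
  induction p with
  | nil => simp at hx
  | @cons a a' b h' q IH =>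
    have hq : q.IsPath := hp.of_cons
    have hna : a ∉ q.support := ((Walk.cons_isPath_iff h' q).mp hp).2
    rw [Walk.edges_cons, List.mem_cons] at hx hy
    rcases hx with hx | hx
    · rw [Sym2.eq_iff] at hx
      rcases hx with ⟨rfl, rfl⟩ | ⟨rfl, rfl⟩
      · -- x = a, c = a'
        rcases hy with hy | hy
        · rw [Sym2.eq_iff] at hy
          rcases hy with ⟨h1, -⟩ | ⟨-, rfl⟩
          · first | exact absurd h1 h'.ne | exact absurd h1.symm h'.ne | exact absurd h1 h'.ne' | exact absurd h1.symm h'.ne'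
          · exact absurd rfl hxy
        · obtain ⟨t, ht⟩ := first_edge q hq hy
          exact ⟨[], t, Or.inl (by rw [Walk.support_cons, ht]; rfl)⟩
      · -- x = a', c = a
        rcases hy with hy | hy
        · rw [Sym2.eq_iff] at hy
          rcases hy with ⟨-, rfl⟩ | ⟨h1, -⟩
          · exact absurd rfl hxy
          · first | exact absurd h1 h'.ne | exact absurd h1.symm h'.ne | exact absurd h1 h'.ne' | exact absurd h1.symm h'.ne'
        · exact absurd (q.fst_mem_support_of_mem_edges hy) hna
    · rcases hy with hy | hy
      · rw [Sym2.eq_iff] at hy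
        rcases hy with ⟨rfl, rfl⟩ | ⟨rfl, rfl⟩
        · exact absurd (q.snd_mem_support_of_mem_edges hx) hna
        · obtain ⟨t, ht⟩ := first_edge q hq (Sym2.eq_swap ▸ hx)
          exact ⟨[], t, Or.inr (by rw [Walk.support_cons, ht]; rfl)⟩
      · obtain ⟨l1, l2, hh | hh⟩ := IH hq hx hy
        · exact ⟨a :: l1, l2, Or.inl (by rw [Walk.support_cons, hh]; rfl)⟩
        · exact ⟨a :: l1, l2, Or.inr (by rw [Walk.support_cons, hh]; rfl)⟩


variable {k n : ℕ}

lemma turnList_cons {a c b : Cell} (hac : (gridGraph k k).Adj a c)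
    (q : (gridGraph k k).Walk c b) : turnList (Walk.cons hac q) = tla a q := rfl

lemma seg_edges_subset (hk : 0 < k) (hn : n = 2*k-1) {a c d b : Cell}
    (hac : (gridGraph k k).Adj a c) (hcd : (gridGraph k k).Adj c d)
    (q' : (gridGraph k k).Walk d b) :
    (seg hk hn c hcd q').edges ⊆ (seg hk hn a hac (.cons hcd q')).edges := by
  rw [seg_cons]; split_ifs <;> intro e he <;> simp [Walk.edges_cons] <;> tauto

lemma T_seg (hk : 0 < k) (hn : n = 2*k-1) :
    ∀ {c b : Cell} (a : Cell) (hac : (gridGraph k k).Adj a c) (q : (gridGraph k k).Walk c b)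
      {l1 l2 : List Cell} {u x v : Cell},
      (Walk.cons hac q).support = l1 ++ u :: x :: v :: l2 →
      (Perp u x v → s(mid u x, mid x v) ∈ (seg hk hn a hac q).edges ∧ x ∈ tla a q) ∧
      (¬Perp u x v → s(mid u x, dbl x) ∈ (seg hk hn a hac q).edges ∧
         s(dbl x, mid x v) ∈ (seg hk hn a hac q).edges)
  | c, _, a, hac, .nil, l1, l2, u, x, v => by
    intro hsup
    have := congrArg List.length hsup
    simp [Walk.support_cons, Walk.support_nil] at this
    omega
  | c, b, a, hac, @Walk.cons _ _ _ d _ hcd q', l1, l2, u, x, v => by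
    intro hsup
    rw [Walk.support_cons, Walk.support_cons] at hsup
    cases l1 with
    | nil =>
      simp only [List.nil_append, List.cons.injEq] at hsup
      obtain ⟨rfl, rfl, hsup⟩ := hsup
      have hv : v = d := by
        have := q'.support_eq_cons
        rw [hsup] at this
        exact (List.cons.injEq _ _ _ _).mp this |>.1
      subst hv
      constructor
      · intro h
        rw [seg_cons, dif_pos h, tla_cons, if_pos h]
        exact ⟨by simp [Walk.edges_cons], by simp⟩
      · intro h
        rw [seg_cons, dif_neg h]
        exact ⟨by simp [Walk.edges_cons], by simp [Walk.edges_cons]⟩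
    | cons a0 l1' =>
      simp only [List.cons_append, List.cons.injEq] at hsup
      obtain ⟨rfl, hsup⟩ := hsup
      have IH := T_seg hk hn c hcd q' (l1 := l1') (l2 := l2) (u := u) (x := x) (v := v)
        (by rw [Walk.support_cons]; exact hsup)
      constructor
      · intro h
        refine ⟨seg_edges_subset hk hn hac hcd q' ((IH.1 h).1), ?_⟩
        rw [tla_cons]
        exact List.mem_append_right _ ((IH.1 h).2)
      · intro h
        exact ⟨seg_edges_subset hk hn hac hcd q' ((IH.2 h).1),
               seg_edges_subset hk hn hac hcd q' ((IH.2 h).2)⟩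

lemma Tend (hk : 0 < k) (hn : n = 2*k-1) :
    ∀ {c b : Cell} (a : Cell) (hac : (gridGraph k k).Adj a c) (q : (gridGraph k k).Walk c b)
      {l1 : List Cell} {u v : Cell},
      (Walk.cons hac q).support = l1 ++ [u, v] →
      s(mid u v, dbl v) ∈ (seg hk hn a hac q).edges
  | c, _, a, hac, .nil, l1, u, v => by
    intro hsup
    rw [Walk.support_cons, Walk.support_nil] at hsup
    cases l1 with
    | nil =>
      simp only [List.nil_append, List.cons.injEq] at hsup
      obtain ⟨rfl, rfl, -⟩ := hsup
      simp [seg_nil, Walk.edges_cons]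
    | cons a0 l1' =>
      have := congrArg List.length hsup
      simp at this <;> omega
  | c, b, a, hac, @Walk.cons _ _ _ d _ hcd q', l1, u, v => by
    intro hsup
    rw [Walk.support_cons] at hsup
    cases l1 with
    | nil =>
      have := congrArg List.length hsup
      rw [Walk.support_cons] at this
      simp at this <;> omega
    | cons a0 l1' =>
      simp only [List.cons_append, List.cons.injEq] at hsup
      obtain ⟨rfl, hsup⟩ := hsup
      exact seg_edges_subset hk hn hac hcd q' (Tend hk hn c hcd q' hsup)

variable {k n : ℕ}

lemma dbl_inj {x y : Cell} (h : dbl x = dbl y) : x = y := by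
  rw [Prod.ext_iff] at h ⊢; simp [dbl] at h; omega

lemma dbl_ne_mid {x u v : Cell} (h : |u.1 - v.1| + |u.2 - v.2| = 1) : dbl x ≠ mid u v := by
  intro he; rw [Prod.ext_iff] at he; simp [dbl, mid] at he
  have := abs_add_one h; omega

lemma mid_inj {a c u v : Cell} (h1 : |a.1 - c.1| + |a.2 - c.2| = 1)
    (h2 : |u.1 - v.1| + |u.2 - v.2| = 1) (he : mid a c = mid u v) :
    (a = u ∧ c = v) ∨ (a = v ∧ c = u) := by
  have d1 := abs_add_one h1; have d2 := abs_add_one h2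
  rw [Prod.ext_iff] at he
  simp only [mid] at he
  simp only [Prod.ext_iff]
  omega

lemma mid_ne_of_ne {a c d : Cell} (h : a ≠ d) : mid a c ≠ mid c d := by
  intro he; rw [Prod.ext_iff] at he; simp [mid] at he
  exact h (Prod.ext_iff.mpr ⟨by omega, by omega⟩)

lemma seg_supp (hk : 0 < k) (hn : n = 2*k-1) :
    ∀ {c b : Cell} (a : Cell) (hac : (gridGraph k k).Adj a c) (q : (gridGraph k k).Walk c b),
      (Walk.cons hac q).IsPath → ∀ w : Cell,
      (w ∈ (seg hk hn a hac q).support ↔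
        (∃ c', c' ∈ q.support ∧ c' ∉ tla a q ∧ w = dbl c') ∨ w = mid a c ∨
        (∃ u v, s(u, v) ∈ q.edges ∧ w = mid u v))
  | c, _, a, hac, .nil, hp, w => by
    rw [seg_nil]
    simp [tla_nil]
    tauto
  | c, b, a, hac, @Walk.cons _ _ _ d _ hcd q', hp, w => by
    have hp' : (Walk.cons hcd q').IsPath := hp.of_cons
    have hcq' : c ∉ q'.support := ((Walk.cons_isPath_iff hcd q').mp hp').2
    have hctla : c ∉ tla c q' := fun hmem => hcq' ((tla_sublist c q').subset hmem)
    have IH := seg_supp hk hn c hcd q' hp' w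
    rw [seg_cons]
    have hqsup : (Walk.cons hcd q').support = c :: q'.support := Walk.support_cons hcd q'
    have hqedg : (Walk.cons hcd q').edges = s(c, d) :: q'.edges := Walk.edges_cons hcd q'
    split_ifs with h
    · rw [Walk.support_cons]
      simp only [List.mem_cons] at *
      constructor
      · rintro (rfl | hw)
        · exact Or.inr (Or.inl rfl)
        · rcases IH.mp hw with ⟨c', hc1, hc2, rfl⟩ | rfl | ⟨u, v, hu, rfl⟩
          · refine Or.inl ⟨c', ?_, ?_, rfl⟩
            · rw [hqsup]; exact List.mem_cons_of_mem _ hc1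
            · rw [tla_cons, if_pos h]
              simp only [List.cons_append, List.nil_append, List.mem_cons, not_or]
              exact ⟨fun hcc => hcq' (hcc ▸ hc1), hc2⟩
          · exact Or.inr (Or.inr ⟨c, d, by rw [hqedg]; exact List.mem_cons_self, rfl⟩)
          · exact Or.inr (Or.inr ⟨u, v, by rw [hqedg]; exact List.mem_cons_of_mem _ hu, rfl⟩)
      · rintro (⟨c', hc1, hc2, rfl⟩ | rfl | ⟨u, v, hu, rfl⟩)
        · rw [hqsup, List.mem_cons] at hc1
          rw [tla_cons, if_pos h] at hc2
          simp only [List.cons_append, List.nil_append, List.mem_cons, not_or] at hc2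
          rcases hc1 with rfl | hc1
          · exact absurd rfl hc2.1
          · exact Or.inr (IH.mpr (Or.inl ⟨c', hc1, hc2.2, rfl⟩))
        · exact Or.inl rfl
        · rw [hqedg, List.mem_cons] at hu
          rcases hu with hu | hu
          · rw [Sym2.eq_iff] at hu
            refine Or.inr (IH.mpr (Or.inr (Or.inl ?_)))
            rcases hu with ⟨rfl, rfl⟩ | ⟨rfl, rfl⟩
            · rfl
            · exact mid_comm _ _
          · exact Or.inr (IH.mpr (Or.inr (Or.inr ⟨u, v, hu, rfl⟩)))
    · rw [Walk.support_cons, Walk.support_cons]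
      simp only [List.mem_cons] at *
      constructor
      · rintro (rfl | rfl | hw)
        · exact Or.inr (Or.inl rfl)
        · refine Or.inl ⟨c, ?_, ?_, rfl⟩
          · rw [hqsup]; exact List.mem_cons_self
          · rw [tla_cons, if_neg h]; simpa using hctla
        · rcases IH.mp hw with ⟨c', hc1, hc2, rfl⟩ | rfl | ⟨u, v, hu, rfl⟩
          · refine Or.inl ⟨c', ?_, ?_, rfl⟩
            · rw [hqsup]; exact List.mem_cons_of_mem _ hc1
            · rw [tla_cons, if_neg h]; simpa using hc2
          · exact Or.inr (Or.inr ⟨c, d, by rw [hqedg]; exact List.mem_cons_self, rfl⟩)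
          · exact Or.inr (Or.inr ⟨u, v, by rw [hqedg]; exact List.mem_cons_of_mem _ hu, rfl⟩)
      · rintro (⟨c', hc1, hc2, rfl⟩ | rfl | ⟨u, v, hu, rfl⟩)
        · rw [hqsup, List.mem_cons] at hc1
          rw [tla_cons, if_neg h] at hc2
          simp only [List.nil_append] at hc2
          rcases hc1 with rfl | hc1
          · exact Or.inr (Or.inl rfl)
          · exact Or.inr (Or.inr (IH.mpr (Or.inl ⟨c', hc1, hc2, rfl⟩)))
        · exact Or.inl rfl
        · rw [hqedg, List.mem_cons] at hu
          rcases hu with hu | hu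
          · rw [Sym2.eq_iff] at hu
            refine Or.inr (Or.inr (IH.mpr (Or.inr (Or.inl ?_))))
            rcases hu with ⟨rfl, rfl⟩ | ⟨rfl, rfl⟩
            · rfl
            · exact mid_comm _ _
          · exact Or.inr (Or.inr (IH.mpr (Or.inr (Or.inr ⟨u, v, hu, rfl⟩))))
variable {k n : ℕ}

lemma psi_nil (hk : 0 < k) (hn : n = 2*k-1) {a : Cell} :
    psi hk hn (.nil (u := a)) = .nil := rfl

lemma psi_cons (hk : 0 < k) (hn : n = 2*k-1) {a c b : Cell} (hac : (gridGraph k k).Adj a c)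
    (q : (gridGraph k k).Walk c b) :
    psi hk hn (.cons hac q) = .cons (adjA hk hn hac) (seg hk hn a hac q) := rfl

lemma turnList_nil {a : Cell} : turnList (k := k) (.nil (u := a)) = [] := rfl

lemma psi_len (hk : 0 < k) (hn : n = 2*k-1) {a b : Cell} (p : (gridGraph k k).Walk a b) :
    (psi hk hn p).length + (turnList p).length = 2 * p.length := by
  cases p with
  | nil => simp [psi_nil, turnList_nil]
  | cons hac q =>
    rw [psi_cons, turnList_cons, Walk.length_cons, Walk.length_cons]
    have := seg_len hk hn _ hac q
    omega

lemma seg_nodup (hk : 0 < k) (hn : n = 2*k-1) :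
    ∀ {c b : Cell} (a : Cell) (hac : (gridGraph k k).Adj a c) (q : (gridGraph k k).Walk c b),
      (Walk.cons hac q).IsPath → (seg hk hn a hac q).support.Nodup
  | c, _, a, hac, .nil, hp => by
    rw [seg_nil]
    simp only [Walk.support_cons, Walk.support_nil, List.nodup_cons, List.mem_singleton,
      List.not_mem_nil, not_false_iff, List.nodup_nil, and_true]
    exact fun h => dbl_ne_mid hac.2.2 h.symm
  | c, b, a, hac, @Walk.cons _ _ _ d _ hcd q', hp => by
    have hp' : (Walk.cons hcd q').IsPath := hp.of_cons
    have IH := seg_nodup hk hn c hcd q' hp'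
    have ha_not : a ∉ (Walk.cons hcd q').support := ((Walk.cons_isPath_iff hac _).mp hp).2
    have hc_not : c ∉ q'.support := ((Walk.cons_isPath_iff hcd q').mp hp').2
    have hmac : mid a c ∉ (seg hk hn c hcd q').support := by
      intro hw
      rcases (seg_supp hk hn c hcd q' hp' _).mp hw with ⟨c', hc1, -, heq⟩ | heq | ⟨u, v, hu, heq⟩
      · exact dbl_ne_mid hac.2.2 heq.symm
      · have had : a = d := by
          rw [Prod.ext_iff] at heq; simp only [mid] at heq
          exact Prod.ext_iff.mpr ⟨by omega, by omega⟩
        apply ha_not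
        rw [had, Walk.support_cons]
        exact List.mem_cons_of_mem _ q'.start_mem_support
      · have hadj := q'.adj_of_mem_edges hu
        rcases mid_inj hac.2.2 hadj.2.2 heq with ⟨-, rfl⟩ | ⟨-, rfl⟩
        · exact hc_not (q'.snd_mem_support_of_mem_edges hu)
        · exact hc_not (q'.fst_mem_support_of_mem_edges hu)
    have hdc : dbl c ∉ (seg hk hn c hcd q').support := by
      intro hw
      rcases (seg_supp hk hn c hcd q' hp' _).mp hw with ⟨c', hc1, -, heq⟩ | heq | ⟨u, v, hu, heq⟩
      · exact hc_not (dbl_inj heq ▸ hc1)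
      · exact dbl_ne_mid hcd.2.2 heq
      · exact dbl_ne_mid (q'.adj_of_mem_edges hu).2.2 heq
    rw [seg_cons]
    split_ifs with h
    · rw [Walk.support_cons, List.nodup_cons]
      exact ⟨hmac, IH⟩
    · rw [Walk.support_cons, Walk.support_cons, List.nodup_cons, List.nodup_cons]
      refine ⟨?_, hdc, IH⟩
      rw [List.mem_cons]
      rintro (heq | hw)
      · exact dbl_ne_mid hac.2.2 heq.symm
      · exact hmac hw

lemma psi_supp (hk : 0 < k) (hn : n = 2*k-1) {a b : Cell} (p : (gridGraph k k).Walk a b)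
    (hp : p.IsPath) (w : Cell) :
    w ∈ (psi hk hn p).support ↔
      (∃ c', c' ∈ p.support ∧ c' ∉ turnList p ∧ w = dbl c') ∨
      (∃ u v, s(u, v) ∈ p.edges ∧ w = mid u v) := by
  cases p with
  | nil =>
    rw [psi_nil]
    simp only [Walk.support_nil, Walk.edges_nil, List.mem_singleton, List.not_mem_nil,
      false_and, exists_false, or_false, turnList_nil]
    constructor
    · intro h; exact ⟨a, rfl, by simp, h⟩
    · rintro ⟨c', rfl, -, h⟩; exact h
  | @cons a c b hac q =>
    have hatla : a ∉ tla a q :=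
      fun h => (((Walk.cons_isPath_iff hac q).mp hp).2) ((tla_sublist a q).subset h)
    have IH := seg_supp hk hn a hac q hp w
    rw [psi_cons, Walk.support_cons, List.mem_cons, turnList_cons]
    constructor
    · rintro (rfl | hw)
      · exact Or.inl ⟨a, (Walk.cons hac q).start_mem_support, hatla, rfl⟩
      · rcases IH.mp hw with ⟨c', h1, h2, rfl⟩ | rfl | ⟨u, v, hu, rfl⟩
        · exact Or.inl ⟨c', by rw [Walk.support_cons]; exact List.mem_cons_of_mem _ h1, h2, rfl⟩
        · exact Or.inr ⟨a, c, by rw [Walk.edges_cons]; exact List.mem_cons_self, rfl⟩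
        · exact Or.inr ⟨u, v, by rw [Walk.edges_cons]; exact List.mem_cons_of_mem _ hu, rfl⟩
    · rintro (⟨c', h1, h2, rfl⟩ | ⟨u, v, hu, rfl⟩)
      · rw [Walk.support_cons, List.mem_cons] at h1
        rcases h1 with rfl | h1
        · exact Or.inl rfl
        · exact Or.inr (IH.mpr (Or.inl ⟨c', h1, h2, rfl⟩))
      · rw [Walk.edges_cons, List.mem_cons] at hu
        rcases hu with hu | hu
        · rw [Sym2.eq_iff] at hu
          refine Or.inr (IH.mpr (Or.inr (Or.inl ?_)))
          rcases hu with ⟨rfl, rfl⟩ | ⟨rfl, rfl⟩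
          · rfl
          · exact mid_comm _ _
        · exact Or.inr (IH.mpr (Or.inr (Or.inr ⟨u, v, hu, rfl⟩)))

lemma psi_isPath (hk : 0 < k) (hn : n = 2*k-1) {a b : Cell} (p : (gridGraph k k).Walk a b)
    (hp : p.IsPath) : (psi hk hn p).IsPath := by
  rw [Walk.isPath_def]
  cases p with
  | nil => simp [psi_nil]
  | @cons a c b hac q =>
    rw [psi_cons, Walk.support_cons, List.nodup_cons]
    refine ⟨?_, seg_nodup hk hn a hac q hp⟩
    intro hw
    rcases (seg_supp hk hn a hac q hp _).mp hw with ⟨c', h1, -, heq⟩ | heq | ⟨u, v, hu, heq⟩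
    · exact (((Walk.cons_isPath_iff hac q).mp hp).2) (dbl_inj heq ▸ h1)
    · exact dbl_ne_mid hac.2.2 heq
    · exact dbl_ne_mid (q.adj_of_mem_edges hu).2.2 heq

lemma turnsAt_cons {G' : SimpleGraph Cell} {a c b x : Cell} (h : G'.Adj a c)
    {q : G'.Walk c b} (ht : TurnsAt q x) : TurnsAt (Walk.cons h q) x := by
  obtain ⟨u, v, h1, h2, h3, h4⟩ := ht
  exact ⟨u, v, h1, by rw [Walk.edges_cons]; exact List.mem_cons_of_mem _ h2,
    by rw [Walk.edges_cons]; exact List.mem_cons_of_mem _ h3, h4⟩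

lemma tla_turns : ∀ {c b : Cell} (a : Cell) (hac : (gridGraph k k).Adj a c)
    (q : (gridGraph k k).Walk c b) {x : Cell}, x ∈ tla a q → TurnsAt (Walk.cons hac q) x
  | _, _, a, hac, .nil, x => by simp [tla_nil]
  | c, b, a, hac, @Walk.cons _ _ _ d _ hcd q', x => by
    intro hx
    rw [tla_cons] at hx
    rcases List.mem_append.mp hx with h1 | h1
    · by_cases hperp : Perp a c d
      · rw [if_pos hperp] at h1
        rw [List.mem_singleton] at h1
        subst h1
        refine ⟨a, d, ?_, ?_, ?_, hperp⟩
        · have h4 := abs_add_one hac.2.2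
          have h5 := abs_add_one hcd.2.2
          intro he
          rw [Prod.ext_iff] at he
          unfold Perp at hperp
          omega
        · rw [Walk.edges_cons]; exact List.mem_cons_self
        · rw [Walk.edges_cons, Walk.edges_cons]
          exact List.mem_cons_of_mem _ (List.mem_cons_self)
      · rw [if_neg hperp] at h1; simp at h1
    · exact turnsAt_cons hac (tla_turns c hcd q' h1)

lemma turns_tla (hk : 0 < k) (hn : n = 2*k-1) {a b x : Cell} (p : (gridGraph k k).Walk a b)
    (hp : p.IsPath) (ht : TurnsAt p x) : x ∈ turnList p := by
  obtain ⟨u, v, huv, he1, he2, hcond⟩ := ht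
  cases p with
  | nil => simp at he1
  | cons hac q =>
    obtain ⟨l1, l2, hh | hh⟩ := two_edges _ hp he1 he2 huv
    · exact ((T_seg hk hn _ hac q hh).1 hcond).2
    · exact ((T_seg hk hn _ hac q hh).1 (perp_comm.mp hcond)).2

lemma turnsAt_iff (hk : 0 < k) (hn : n = 2*k-1) {a b : Cell} (p : (gridGraph k k).Walk a b)
    (hp : p.IsPath) (x : Cell) : TurnsAt p x ↔ x ∈ turnList p := by
  constructor
  · exact turns_tla hk hn p hp
  · intro h
    cases p with
    | nil => simp [turnList_nil] at h
    | cons hac q => exact tla_turns _ hac q h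

lemma edge_incident (hk : 0 < k) (hn : n = 2*k-1) {a b c v : Cell}
    (p : (gridGraph k k).Walk a b) (hp : p.IsPath) (he : s(c, v) ∈ p.edges)
    (hnt : c ∉ turnList p) : s(dbl c, mid c v) ∈ (psi hk hn p).edges := by
  cases p with
  | nil => simp at he
  | @cons a c0 b hac q =>
    obtain ⟨l1, l2, hh | hh⟩ := edge_in _ he
    · rcases List.eq_nil_or_concat l1 with rfl | ⟨l1', u0, rfl⟩
      · rw [Walk.support_cons] at hh
        simp only [List.nil_append, List.cons.injEq] at hh
        obtain ⟨rfl, hh⟩ := hh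
        have hv : v = c0 := by
          have := q.support_eq_cons
          rw [hh] at this
          exact ((List.cons.injEq _ _ _ _).mp this).1
        subst hv
        rw [psi_cons, Walk.edges_cons]
        exact List.mem_cons_self
      · rw [List.concat_eq_append, List.append_assoc] at hh
        simp only [List.cons_append, List.nil_append] at hh
        have hT := T_seg hk hn _ hac q (l1 := l1') (l2 := l2) (u := u0) (x := c) (v := v) hh
        have hnperp : ¬ Perp u0 c v := fun hperp => hnt ((hT.1 hperp).2)
        rw [psi_cons, Walk.edges_cons]
        exact List.mem_cons_of_mem _ ((hT.2 hnperp).2)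
    · cases l2 with
      | nil =>
        have hE := Tend hk hn _ hac q (l1 := l1) (u := v) (v := c) hh
        rw [psi_cons, Walk.edges_cons]
        refine List.mem_cons_of_mem _ ?_
        have hswap : s(dbl c, mid c v) = s(mid v c, dbl c) := by
          rw [mid_comm v c]; exact Sym2.eq_swap
        rw [hswap]; exact hE
      | cons w0 l2' =>
        have hT := T_seg hk hn _ hac q (l1 := l1) (l2 := l2') (u := v) (x := c) (v := w0) hh
        have hnperp : ¬ Perp v c w0 := fun hperp => hnt ((hT.1 hperp).2)
        have hE := (hT.2 hnperp).1
        rw [psi_cons, Walk.edges_cons]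
        refine List.mem_cons_of_mem _ ?_
        have hswap : s(dbl c, mid c v) = s(mid v c, dbl c) := by
          rw [mid_comm v c]; exact Sym2.eq_swap
        rw [hswap]; exact hE

lemma turn_edge (hk : 0 < k) (hn : n = 2*k-1) {a b x c y : Cell}
    (p : (gridGraph k k).Walk a b) (hp : p.IsPath) (hx : s(x, c) ∈ p.edges)
    (hy : s(c, y) ∈ p.edges) (hxy : x ≠ y) (hperp : Perp x c y) :
    s(mid x c, mid c y) ∈ (psi hk hn p).edges := by
  cases p with
  | nil => simp at hx
  | cons hac q =>
    obtain ⟨l1, l2, hh | hh⟩ := two_edges _ hp hx hy hxy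
    · rw [psi_cons, Walk.edges_cons]
      exact List.mem_cons_of_mem _ ((T_seg hk hn _ hac q hh).1 hperp).1
    · have hE := ((T_seg hk hn _ hac q hh).1 (perp_comm.mp hperp)).1
      rw [psi_cons, Walk.edges_cons]
      refine List.mem_cons_of_mem _ ?_
      have hswap : s(mid x c, mid c y) = s(mid y c, mid c x) := by
        rw [mid_comm x c, mid_comm c y]; exact Sym2.eq_swap
      rw [hswap]; exact hE

set_option maxHeartbeats 1000000 in
lemma mids_adj {x y x' y' : Cell} (h1 : |x.1 - y.1| + |x.2 - y.2| = 1)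
    (h2 : |x'.1 - y'.1| + |x'.2 - y'.2| = 1) (hne : mid x y ≠ mid x' y')
    (ha : |(mid x y).1 - (mid x' y').1| ≤ 1) (hb : |(mid x y).2 - (mid x' y').2| ≤ 1) :
    (x = x' ∧ y ≠ y' ∧ Perp y x y') ∨ (x = y' ∧ y ≠ x' ∧ Perp y x x') ∨
    (y = x' ∧ x ≠ y' ∧ Perp x y y') ∨ (y = y' ∧ x ≠ x' ∧ Perp x y x') := by
  have d1 := abs_add_one h1
  have d2 := abs_add_one h2
  rw [abs_le] at ha hb
  simp only [mid, Perp, ne_eq, Prod.ext_iff, not_and] at *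
  rcases d1 with ⟨e1, e2⟩ | ⟨e1, e2⟩ | ⟨e1, e2⟩ | ⟨e1, e2⟩ <;>
    rcases d2 with ⟨f1, f2⟩ | ⟨f1, f2⟩ | ⟨f1, f2⟩ | ⟨f1, f2⟩ <;> omega
variable {k n : ℕ}

lemma turnList_sublist {a b : Cell} (p : (gridGraph k k).Walk a b) :
    (turnList p).Sublist p.support := by
  cases p with
  | nil => simp [turnList_nil]
  | cons hac q =>
    rw [turnList_cons, Walk.support_cons]
    refine (tla_sublist _ q).trans ?_
    first
      | exact List.sublist_cons _ _
      | exact List.sublist_cons_self _ _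

lemma turnList_nodup {a b : Cell} (p : (gridGraph k k).Walk a b) (hp : p.IsPath) :
    (turnList p).Nodup := by
  first
    | exact hp.support_nodup.sublist (turnList_sublist p)
    | exact (turnList_sublist p).nodup hp.support_nodup
    | exact List.Nodup.sublist (turnList_sublist p) hp.support_nodup

lemma turnCount_eq (hk : 0 < k) (hn : n = 2*k-1) {a b : Cell} (p : (gridGraph k k).Walk a b)
    (hp : p.IsPath) : turnCount p = (turnList p).length := by
  have hnd := turnList_nodup p hp
  have hset : {c : Cell | TurnsAt p c} = ↑(turnList p).toFinset := by
    ext c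
    simp only [Set.mem_setOf_eq, Finset.coe_sort_coe, List.coe_toFinset, Set.mem_setOf_eq,
      Finset.mem_coe, List.mem_toFinset]
    exact turnsAt_iff hk hn p hp c
  rw [turnCount, hset, Set.ncard_coe_finset, List.toFinset_card_of_nodup hnd]

lemma sqBoard_ncard (hk : 0 < k) : (sqBoard k).ncard = k ^ 2 := by
  have hEq : sqBoard k = ↑((Finset.Icc (0:ℤ) ((k:ℤ)-1)) ×ˢ (Finset.Icc (0:ℤ) ((k:ℤ)-1))) := by
    ext w
    simp only [sqBoard, Set.mem_setOf_eq, Finset.coe_product, Set.mem_prod, Finset.mem_coe,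
      Finset.mem_Icc]
    tauto
  rw [hEq, Set.ncard_coe_finset, Finset.card_product, Int.card_Icc]
  have h2 : ((k:ℤ) - 1 + 1 - 0).toNat = k := by omega
  rw [h2]; ring
end PsiSnake
/-- ψ(ρ) (scale up by two, smooth the turns) is an induced path in the
king graph of length 2(k²−1) − t, described here by its length and vertex set. -/
theorem psi_snake (k n : ℕ) (hk : 0 < k) (hn : n = 2 * k - 1)
    {a b : Cell} (rho : (gridGraph k k).Walk a b) (hrho : IsHamOn (sqBoard k) rho) :
    ∃ (a' b' : Cell) (P : (kingGraph n).Walk a' b'),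
      IsSnake (kingGraph n) P ∧
      P.length = 2 * (k ^ 2 - 1) - turnCount rho ∧
      {v : Cell | v ∈ P.support} =
        {w : Cell | ∃ c, c ∈ rho.support ∧ ¬ TurnsAt rho c ∧ w = (2 * c.1, 2 * c.2)} ∪
        {w : Cell | ∃ u v : Cell, s(u, v) ∈ rho.edges ∧ w = (u.1 + v.1, u.2 + v.2)} := by
  obtain ⟨hp, hham⟩ := hrho
  have hn' : n = 2*k-1 := hn
  -- length of rho
  have hlen : rho.length + 1 = k ^ 2 := by
    have h1 : sqBoard k = {v : Cell | v ∈ rho.support} := Set.ext fun v => hham v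
    have h2 : {v : Cell | v ∈ rho.support} = ↑rho.support.toFinset := by
      ext v; simp
    have h3 : (sqBoard k).ncard = rho.support.length := by
      rw [h1, h2, Set.ncard_coe_finset, List.toFinset_card_of_nodup hp.support_nodup]
    rw [PsiSnake.sqBoard_ncard hk] at h3
    have h4 := rho.length_support
    omega
  refine ⟨PsiSnake.dbl a, PsiSnake.dbl b, PsiSnake.psi hk hn' rho,
    ⟨PsiSnake.psi_isPath hk hn' rho hp, ?_⟩, ?_, ?_⟩
  · -- induced
    intro u hu v hv hadj
    obtain ⟨hne, hmemu, hmemv, hax, hay⟩ := hadj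
    rcases (PsiSnake.psi_supp hk hn' rho hp u).mp hu with
        ⟨c1, hc1s, hc1t, rfl⟩ | ⟨x, y, hxy, rfl⟩ <;>
      rcases (PsiSnake.psi_supp hk hn' rho hp v).mp hv with
        ⟨c2, hc2s, hc2t, rfl⟩ | ⟨x', y', hx'y', rfl⟩
    · -- dbl / dbl
      exfalso; apply hne
      rw [abs_le] at hax hay
      simp only [PsiSnake.dbl] at hax hay ⊢
      rw [Prod.ext_iff]
      constructor <;> simp <;> omega
    · -- dbl / mid
      have hadjxy := rho.adj_of_mem_edges hx'y'
      have hcases := PsiSnake.abs_add_one hadjxy.2.2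
      have hc : c1 = x' ∨ c1 = y' := by
        rw [abs_le] at hax hay
        simp only [PsiSnake.dbl, PsiSnake.mid] at hax hay
        simp only [Prod.ext_iff]; omega
      rcases hc with rfl | rfl
      · exact PsiSnake.edge_incident hk hn' rho hp hx'y' hc1t
      · rw [PsiSnake.mid_comm x' c1]
        exact PsiSnake.edge_incident hk hn' rho hp (Sym2.eq_swap ▸ hx'y') hc1t
    · -- mid / dbl
      rw [Sym2.eq_swap]
      have hadjxy := rho.adj_of_mem_edges hxy
      have hcases := PsiSnake.abs_add_one hadjxy.2.2
      have hc : c2 = x ∨ c2 = y := by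
        rw [abs_le] at hax hay
        simp only [PsiSnake.dbl, PsiSnake.mid] at hax hay
        simp only [Prod.ext_iff]; omega
      rcases hc with rfl | rfl
      · exact PsiSnake.edge_incident hk hn' rho hp hxy hc2t
      · rw [PsiSnake.mid_comm x c2]
        exact PsiSnake.edge_incident hk hn' rho hp (Sym2.eq_swap ▸ hxy) hc2t
    · -- mid / mid
      have h1 := (rho.adj_of_mem_edges hxy).2.2
      have h2 := (rho.adj_of_mem_edges hx'y').2.2
      rcases PsiSnake.mids_adj h1 h2 hne hax hay with
        ⟨rfl, hyy', hperp⟩ | ⟨heq, hyx', hperp⟩ | ⟨heq, hxy', hperp⟩ | ⟨heq, hxx', hperp⟩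
      · -- x = x'
        rw [PsiSnake.mid_comm x y]
        exact PsiSnake.turn_edge hk hn' rho hp (Sym2.eq_swap ▸ hxy) hx'y' hyy' hperp
      · -- x = y'
        subst heq
        rw [PsiSnake.mid_comm x y, PsiSnake.mid_comm x' x]
        exact PsiSnake.turn_edge hk hn' rho hp (Sym2.eq_swap ▸ hxy)
          (Sym2.eq_swap ▸ hx'y') hyx' hperp
      · -- y = x'
        subst heq
        exact PsiSnake.turn_edge hk hn' rho hp hxy hx'y' hxy' hperp
      · -- y = y'
        subst heq
        rw [PsiSnake.mid_comm x' y]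
        exact PsiSnake.turn_edge hk hn' rho hp hxy (Sym2.eq_swap ▸ hx'y') hxx' hperp
  · -- length
    have hpl := PsiSnake.psi_len hk hn' rho
    have ht := PsiSnake.turnCount_eq hk hn' rho hp
    omega
  · -- support set
    ext w
    simp only [Set.mem_setOf_eq, Set.mem_union]
    rw [PsiSnake.psi_supp hk hn' rho hp w]
    constructor
    · rintro (⟨c', h1, h2, rfl⟩ | ⟨u, v, hu, rfl⟩)
      · exact Or.inl ⟨c', h1, fun ht => h2 (PsiSnake.turns_tla hk hn' rho hp ht), rfl⟩
      · exact Or.inr ⟨u, v, hu, rfl⟩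
    · rintro (⟨c', h1, h2, rfl⟩ | ⟨u, v, hu, rfl⟩)
      · exact Or.inl ⟨c', h1,
          fun hm => h2 ((PsiSnake.turnsAt_iff hk hn' rho hp c').mpr hm), rfl⟩
      · exact Or.inr ⟨u, v, hu, rfl⟩
end

section
/- The smallest number of turns in a Hamiltonian path of the s×s grid graph is 2s − 2. -/
open SimpleGraph

lemma exists_incident_edge {V : Type*} {G : SimpleGraph V} :
    ∀ {a b : V} (p : G.Walk a b), ¬ p.Nil → ∀ c ∈ p.support, ∃ d, s(c, d) ∈ p.edges := by
  intro a b p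
  induction p with
  | nil => intro h; exact absurd Walk.nil_nil h
  | @cons a a1 b h q ih =>
    intro _ c hc
    rw [Walk.support_cons, List.mem_cons] at hc
    rcases hc with rfl | hc
    · exact ⟨a1, by simp [Walk.edges_cons]⟩
    · cases q with
      | nil =>
        simp at hc
        subst hc
        exact ⟨a, by simp [Walk.edges_cons, Sym2.eq_swap]⟩
      | cons h' q' =>
        obtain ⟨d, hd⟩ := ih (by simp [Walk.nil_iff_eq_nil]) c hc
        refine ⟨d, ?_⟩
        rw [Walk.edges_cons, List.mem_cons]
        exact Or.inr hd

lemma second_edge {V : Type*} {G : SimpleGraph V} :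
    ∀ {a b : V} (p : G.Walk a b), p.IsPath → ∀ {c u : V}, c ≠ a → c ≠ b →
      s(u, c) ∈ p.edges → ∃ w, w ≠ u ∧ s(w, c) ∈ p.edges := by
  intro a b p
  induction p with
  | nil => intro _ c u _ _ h; simp at h
  | @cons a a1 b h q ih =>
    intro hp c u hca hcb he
    have hq : q.IsPath ∧ a ∉ q.support := by
      rw [Walk.cons_isPath_iff] at hp; exact ⟨hp.1, hp.2⟩
    rw [Walk.edges_cons, List.mem_cons] at he
    rcases he with he | he
    · rw [Sym2.eq_iff] at he
      rcases he with ⟨rfl, rfl⟩ | ⟨rfl, rfl⟩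
      · -- u = a, c = a1
        cases q with
        | nil => exact absurd rfl hcb
        | @cons _ a2 _ h' q' =>
          refine ⟨a2, ?_, ?_⟩
          · intro hh
            exact hq.2 (hh ▸ (by simp : a2 ∈ (Walk.cons h' q').support))
          · rw [Walk.edges_cons, List.mem_cons]
            right
            rw [Walk.edges_cons, List.mem_cons]
            left
            exact Sym2.eq_swap
      · exact absurd rfl hca
    · by_cases hc1 : c = a1
      · subst hc1
        refine ⟨a, ?_, by simp [Walk.edges_cons]⟩
        intro hh
        exact hq.2 (hh ▸ Walk.fst_mem_support_of_mem_edges q he)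
      · obtain ⟨w, hw1, hw2⟩ := ih hq.1 hc1 hcb he
        exact ⟨w, hw1, by simp [Walk.edges_cons, hw2]⟩

lemma grid_adj_cases {s : ℕ} {u v : Cell} (h : (gridGraph s s).Adj u v) :
    (u.2 = v.2 ∧ (u.1 = v.1 + 1 ∨ v.1 = u.1 + 1)) ∨
    (u.1 = v.1 ∧ (u.2 = v.2 + 1 ∨ v.2 = u.2 + 1)) := by
  have h3 := h.2.2
  rcases abs_cases (u.1 - v.1) with ⟨e1, _⟩ | ⟨e1, _⟩ <;>
    rcases abs_cases (u.2 - v.2) with ⟨e2, _⟩ | ⟨e2, _⟩ <;>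
    rw [e1, e2] at h3 <;> omega

lemma adj_of_mem_edges {s : ℕ} {a b : Cell} {p : (gridGraph s s).Walk a b} {u v : Cell}
    (h : s(u, v) ∈ p.edges) : (gridGraph s s).Adj u v :=
  p.edges_subset_edgeSet h

/-- key row lemma: a row with a horizontal edge contains two turn-or-endpoint cells -/
lemma row_two {s : ℕ} {a b : Cell} {p : (gridGraph s s).Walk a b}
    (hp : IsHamOn (sqBoard s) p) (r : ℤ)
    (hhor : ∃ u v : Cell, s(u, v) ∈ p.edges ∧ u.2 = r ∧ v.2 = r) :
    ∃ c1 c2 : Cell, c1 ≠ c2 ∧ c1.2 = r ∧ c2.2 = r ∧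
      (TurnsAt p c1 ∨ c1 = a ∨ c1 = b) ∧ (TurnsAt p c2 ∨ c2 = a ∨ c2 = b) := by
  classical
  set X : ℤ → Prop := fun x => ∃ x' : ℤ, s(((x, r) : Cell), ((x', r) : Cell)) ∈ p.edges with hX
  have hboard : ∀ x : ℤ, X x → 0 ≤ x ∧ x ≤ (s : ℤ) - 1 := by
    rintro x ⟨x', hx'⟩
    have hsup : ((x, r) : Cell) ∈ p.support := Walk.fst_mem_support_of_mem_edges p hx'
    have hb := (hp.2 _).mpr hsup
    exact ⟨hb.1, hb.2.1⟩
  -- symmetry of X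
  have hXsymm : ∀ x x' : ℤ, s(((x, r) : Cell), ((x', r) : Cell)) ∈ p.edges → X x ∧ X x' := by
    intro x x' hx
    exact ⟨⟨x', hx⟩, ⟨x, by rwa [Sym2.eq_swap] at hx⟩⟩
  obtain ⟨u, v, huv, hu2, hv2⟩ := hhor
  have hXu : X u.1 ∧ X v.1 := by
    apply hXsymm
    have : u = (u.1, r) ∧ v = (v.1, r) := by
      constructor <;> [rw [← hu2]; rw [← hv2]]
    rwa [← this.1, ← this.2]
  have hne : ∃ x, X x := ⟨u.1, hXu.1⟩
  obtain ⟨m, hmX, hmle⟩ := Int.exists_least_of_bdd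
    ⟨0, fun z hz => (hboard z hz).1⟩ hne
  obtain ⟨M, hMX, hMge⟩ := Int.exists_greatest_of_bdd
    ⟨(s : ℤ) - 1, fun z hz => (hboard z hz).2⟩ hne
  -- m < M
  have hmM : m < M := by
    obtain ⟨x', hx'⟩ := hXu.1
    have hadj := adj_of_mem_edges hx'
    have hcases := grid_adj_cases hadj
    dsimp only at hcases
    have hx'X := (hXsymm _ _ hx').2
    rcases hcases with ⟨-, hc⟩ | ⟨-, hc⟩
    · rcases hc with hc | hc
      · have h1 := hmle _ hx'X
        have h2 := hMge _ hXu.1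
        omega
      · have h1 := hmle _ hXu.1
        have h2 := hMge _ hx'X
        omega
    · omega
  -- the two cells
  have main : ∀ (x : ℤ) (d : ℤ), X x → (¬ X (x + d)) → (d = 1 ∨ d = -1) →
      (TurnsAt p (x, r) ∨ ((x, r) : Cell) = a ∨ ((x, r) : Cell) = b) := by
    rintro x d ⟨x', hx'⟩ hnx hd
    by_cases hab : ((x, r) : Cell) = a ∨ ((x, r) : Cell) = b
    · right; exact hab
    push_neg at hab
    left
    -- the horizontal edge at (x,r) goes to (x - d, r)
    have hadj := adj_of_mem_edges hx'
    have hcases := grid_adj_cases hadj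
    dsimp only at hcases
    have hx'' : x' = x - d := by
      rcases hcases with ⟨-, hc⟩ | ⟨-, hc⟩
      · rcases hd with rfl | rfl
        · rcases hc with hc | hc
          · omega
          · exact absurd (hc ▸ (hXsymm _ _ hx').2) hnx
        · rcases hc with hc | hc
          · exfalso
            apply hnx
            have h2 := (hXsymm _ _ hx').2
            have hxx : x + -1 = x' := by omega
            rwa [hxx]
          · omega
      · omega
    subst hx''
    -- second edge at (x,r)
    have hmem2 : s((((x - d, r) : Cell)), ((x, r) : Cell)) ∈ p.edges := by
      rwa [Sym2.eq_swap] at hx'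
    obtain ⟨w, hwne, hw⟩ := second_edge p hp.1 hab.1 hab.2 hmem2
    have hadjw := adj_of_mem_edges hw
    have hwc := grid_adj_cases hadjw
    simp only at hwc
    rcases hwc with ⟨hw2, hw1⟩ | ⟨hw1, hw2⟩
    · -- w horizontal: w = (x ± 1, r); w ≠ x - d forces w = x + d, contradicting ¬X (x+d)
      exfalso
      have hwx : w = ((w.1, r) : Cell) := by rw [← hw2]
      have hwX : X w.1 := by
        refine ⟨x, ?_⟩
        rwa [← hwx]
      have : w.1 ≠ x - d := by
        intro hh
        apply hwne
        rw [hwx, hh]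
      have : w.1 = x + d := by omega
      rw [← this] at hnx
      exact hnx hwX
    · -- w vertical : turn!
      refine ⟨(x - d, r), w, ?_, hmem2, ?_, ?_⟩
      · intro hh
        rw [← hh] at hw1
        simp at hw1
        omega
      · rwa [Sym2.eq_swap] at hw
      · left
        exact ⟨rfl, hw1⟩
  have hm := main m (-1) hmX (fun hX1 => by have := hmle _ hX1; omega) (Or.inr rfl)
  have hM := main M 1 hMX (fun hX1 => by have := hMge _ hX1; omega) (Or.inl rfl)
  refine ⟨(m, r), (M, r), ?_, rfl, rfl, hm, hM⟩
  intro hh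
  rw [Prod.mk.injEq] at hh
  omega

lemma sqBoard_finite (s : ℕ) : (sqBoard s).Finite := by
  apply Set.Finite.subset ((Set.finite_Icc (0:ℤ) ((s:ℤ)-1)).prod (Set.finite_Icc (0:ℤ) ((s:ℤ)-1)))
  rintro ⟨x, y⟩ ⟨h1, h2, h3, h4⟩
  exact ⟨Set.mem_Icc.mpr ⟨h1, h2⟩, Set.mem_Icc.mpr ⟨h3, h4⟩⟩

lemma turns_subset_board {s : ℕ} {a b : Cell} {p : (gridGraph s s).Walk a b}
    (hp : IsHamOn (sqBoard s) p) : {c | TurnsAt p c} ⊆ sqBoard s := by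
  rintro c ⟨u, v, -, hu, -, -⟩
  exact (hp.2 c).mpr (Walk.snd_mem_support_of_mem_edges p hu)

lemma count_rows {s : ℕ} {a b : Cell} {p : (gridGraph s s).Walk a b}
    (hp : IsHamOn (sqBoard s) p)
    (hrows : ∀ r : ℤ, 0 ≤ r → r ≤ (s:ℤ) - 1 →
      ∃ u v : Cell, s(u, v) ∈ p.edges ∧ u.2 = r ∧ v.2 = r) :
    2 * s ≤ turnCount p + 2 := by
  classical
  set P : Cell → Prop := fun c => TurnsAt p c ∨ c = a ∨ c = b with hP
  have H : ∀ r : ℤ, ∃ c1 c2 : Cell, 0 ≤ r → r ≤ (s:ℤ) - 1 →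
      c1 ≠ c2 ∧ c1.2 = r ∧ c2.2 = r ∧ P c1 ∧ P c2 := by
    intro r
    by_cases h : 0 ≤ r ∧ r ≤ (s:ℤ) - 1
    · obtain ⟨c1, c2, h1, h2, h3, h4, h5⟩ := row_two hp r (hrows r h.1 h.2)
      exact ⟨c1, c2, fun _ _ => ⟨h1, h2, h3, h4, h5⟩⟩
    · exact ⟨(0,0), (0,0), fun h1 h2 => absurd ⟨h1, h2⟩ h⟩
  choose c1 c2 hc using H
  set F : Finset Cell := (Finset.Icc (0:ℤ) ((s:ℤ)-1)).biUnion (fun r => {c1 r, c2 r}) with hF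
  have hcard : F.card = 2 * s := by
    rw [hF, Finset.card_biUnion]
    · have : ∀ r ∈ Finset.Icc (0:ℤ) ((s:ℤ)-1), ({c1 r, c2 r} : Finset Cell).card = 2 := by
        intro r hr
        rw [Finset.mem_Icc] at hr
        exact Finset.card_pair (hc r hr.1 hr.2).1
      rw [Finset.sum_congr rfl this, Finset.sum_const, Int.card_Icc]
      simp [mul_comm]
    · intro x hx y hy hxy
      rw [Finset.mem_coe, Finset.mem_Icc] at hx hy
      rw [Function.onFun, Finset.disjoint_left]
      intro z hz hz'
      have h1 := hc x hx.1 hx.2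
      have h2 := hc y hy.1 hy.2
      have e1 : z.2 = x := by
        rcases Finset.mem_insert.mp hz with rfl | hz
        · exact h1.2.1
        · rw [Finset.mem_singleton] at hz; subst hz; exact h1.2.2.1
      have e2 : z.2 = y := by
        rcases Finset.mem_insert.mp hz' with rfl | hz'
        · exact h2.2.1
        · rw [Finset.mem_singleton] at hz'; subst hz'; exact h2.2.2.1
      exact hxy (e1 ▸ e2)
  set S : Set Cell := {c | TurnsAt p c} ∪ {a, b} with hS
  have hSfin : S.Finite := by
    apply Set.Finite.union
    · exact (sqBoard_finite s).subset (turns_subset_board hp)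
    · exact (Set.finite_singleton b).insert a
  have hsub : (F : Set Cell) ⊆ S := by
    intro z hz
    rw [hF] at hz
    simp only [Finset.coe_biUnion, Set.mem_iUnion, Finset.mem_coe, Finset.mem_Icc] at hz
    obtain ⟨r, ⟨hr1, hr2⟩, hzz⟩ := hz
    have h1 := hc r hr1 hr2
    have : P z := by
      rcases Finset.mem_insert.mp hzz with rfl | hzz
      · exact h1.2.2.2.1
      · rw [Finset.mem_singleton] at hzz; subst hzz; exact h1.2.2.2.2
    rcases this with h | h | h
    · exact Or.inl h
    · exact Or.inr (by simp [h])
    · exact Or.inr (by simp [h])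
  have h2s : 2 * s ≤ S.ncard := by
    calc 2 * s = F.card := hcard.symm
    _ = (F : Set Cell).ncard := (Set.ncard_coe_finset F).symm
    _ ≤ S.ncard := Set.ncard_le_ncard hsub hSfin
  have hle : S.ncard ≤ turnCount p + 2 := by
    calc S.ncard ≤ ({c | TurnsAt p c} : Set Cell).ncard + ({a, b} : Set Cell).ncard :=
          Set.ncard_union_le _ _
    _ ≤ turnCount p + 2 := by
        apply Nat.add_le_add_left
        calc ({a, b} : Set Cell).ncard ≤ ({b} : Set Cell).ncard + 1 := Set.ncard_insert_le a {b}
        _ ≤ 2 := by rw [Set.ncard_singleton]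
  omega

def swapHom (s : ℕ) : gridGraph s s →g gridGraph s s where
  toFun := Prod.swap
  map_rel' := by
    rintro u v ⟨h1, h2, h3⟩
    refine ⟨⟨h1.2.2.1, h1.2.2.2, h1.1, h1.2.1⟩, ⟨h2.2.2.1, h2.2.2.2, h2.1, h2.2.1⟩, ?_⟩
    simpa [add_comm] using h3

lemma swap_edges {s : ℕ} {a b : Cell} {p : (gridGraph s s).Walk a b} {u v : Cell} :
    s(u, v) ∈ (p.map (swapHom s)).edges ↔ s(u.swap, v.swap) ∈ p.edges := by
  rw [Walk.edges_map, List.mem_map]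
  constructor
  · rintro ⟨e, he, heq⟩
    induction e with
    | _ x y =>
      rw [show (swapHom s : Cell → Cell) = Prod.swap from rfl] at heq
      rw [Sym2.map_pair_eq, Sym2.eq_iff] at heq
      rcases heq with ⟨h1, h2⟩ | ⟨h1, h2⟩
      · rw [← h1, ← h2, Prod.swap_swap, Prod.swap_swap]
        exact he
      · rw [← h1, ← h2, Prod.swap_swap, Prod.swap_swap, Sym2.eq_swap]
        exact he
  · intro h
    refine ⟨s(u.swap, v.swap), h, ?_⟩
    rw [show (swapHom s : Cell → Cell) = Prod.swap from rfl, Sym2.map_pair_eq,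
      Prod.swap_swap, Prod.swap_swap]

lemma turnsAt_map {s : ℕ} {a b : Cell} {p : (gridGraph s s).Walk a b} {c : Cell} :
    TurnsAt (p.map (swapHom s)) c ↔ TurnsAt p c.swap := by
  constructor
  · rintro ⟨u, v, hne, h1, h2, hd⟩
    refine ⟨u.swap, v.swap, fun h => hne (Prod.swap_injective h),
      swap_edges.mp h1, swap_edges.mp h2, ?_⟩
    rcases hd with ⟨e1, e2⟩ | ⟨e1, e2⟩
    · exact Or.inr ⟨by simpa using e1, by simpa using e2⟩
    · exact Or.inl ⟨by simpa using e1, by simpa using e2⟩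
  · rintro ⟨u, v, hne, h1, h2, hd⟩
    refine ⟨u.swap, v.swap, fun h => hne (Prod.swap_injective h), ?_, ?_, ?_⟩
    · rw [swap_edges]; exact h1
    · rw [swap_edges]; exact h2
    · rcases hd with ⟨e1, e2⟩ | ⟨e1, e2⟩
      · exact Or.inr ⟨by simpa using e1, by simpa using e2⟩
      · exact Or.inl ⟨by simpa using e1, by simpa using e2⟩

lemma not_nil_of_two {V : Type*} {G : SimpleGraph V} {a b : V} {p : G.Walk a b}
    {x y : V} (hx : x ∈ p.support) (hy : y ∈ p.support) (hxy : x ≠ y) : ¬ p.Nil := by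
  cases p with
  | nil =>
    rw [Walk.support_nil, List.mem_singleton] at hx hy
    exact absurd (hx.trans hy.symm) hxy
  | cons h q => exact Walk.not_nil_cons

theorem turn_lower {s : ℕ} {a b : Cell} {p : (gridGraph s s).Walk a b}
    (hp : IsHamOn (sqBoard s) p) : 2 * s - 2 ≤ turnCount p := by
  classical
  rcases Nat.lt_or_ge s 2 with hs | hs
  · omega
  by_cases hrows : ∀ r : ℤ, 0 ≤ r → r ≤ (s:ℤ) - 1 →
      ∃ u v : Cell, s(u, v) ∈ p.edges ∧ u.2 = r ∧ v.2 = r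
  · have := count_rows hp hrows
    omega
  · push_neg at hrows
    obtain ⟨r0, hr01, hr02, hno⟩ := hrows
    have hnn : ¬ p.Nil := by
      have h1 : ((0, 0) : Cell) ∈ p.support := by
        apply (hp.2 _).mp
        refine ⟨le_refl _, by push_cast; omega, le_refl _, by push_cast; omega⟩
      have h2 : ((0, 1) : Cell) ∈ p.support := by
        apply (hp.2 _).mp
        refine ⟨le_refl _, by push_cast; omega, by norm_num, by push_cast; omega⟩
      refine not_nil_of_two h1 h2 ?_
      intro hh
      have := congrArg Prod.snd hh
      simp at this
    have hcols : ∀ c : ℤ, 0 ≤ c → c ≤ (s:ℤ) - 1 →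
        ∃ u v : Cell, s(u, v) ∈ p.edges ∧ u.1 = c ∧ v.1 = c := by
      intro c h1 h2
      have hsup : ((c, r0) : Cell) ∈ p.support := (hp.2 _).mp ⟨h1, h2, hr01, hr02⟩
      obtain ⟨d, hd⟩ := exists_incident_edge p hnn _ hsup
      have hcd := grid_adj_cases (adj_of_mem_edges hd)
      dsimp only at hcd
      rcases hcd with ⟨hc, -⟩ | ⟨hc, -⟩
      · exact absurd hc.symm (hno (c, r0) d hd rfl)
      · exact ⟨(c, r0), d, hd, rfl, hc.symm⟩
    -- pass to the transposed walk
    set q := p.map (swapHom s) with hq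
    have hswapinj : Function.Injective (swapHom s : Cell → Cell) := Prod.swap_injective
    have hamq : IsHamOn (sqBoard s) q := by
      constructor
      · exact Walk.map_isPath_of_injective hswapinj hp.1
      · intro v
        rw [hq, Walk.support_map, List.mem_map]
        constructor
        · intro hv
          refine ⟨v.swap, (hp.2 v.swap).mp ⟨hv.2.2.1, hv.2.2.2, hv.1, hv.2.1⟩, Prod.swap_swap v⟩
        · rintro ⟨w, hw, rfl⟩
          have := (hp.2 w).mpr hw
          exact ⟨this.2.2.1, this.2.2.2, this.1, this.2.1⟩
    have hrowsq : ∀ r : ℤ, 0 ≤ r → r ≤ (s:ℤ) - 1 →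
        ∃ u v : Cell, s(u, v) ∈ q.edges ∧ u.2 = r ∧ v.2 = r := by
      intro r h1 h2
      obtain ⟨u, v, he, hu, hv⟩ := hcols r h1 h2
      refine ⟨u.swap, v.swap, ?_, by simpa using hu, by simpa using hv⟩
      rw [hq, swap_edges, Prod.swap_swap, Prod.swap_swap]
      exact he
    have hcount := count_rows hamq hrowsq
    have heq : turnCount q = turnCount p := by
      unfold turnCount
      have : {c : Cell | TurnsAt q c} = Prod.swap '' {c : Cell | TurnsAt p c} := by
        ext c
        rw [Set.image_swap_eq_preimage_swap]
        exact turnsAt_map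
      rw [this, Set.ncard_image_of_injective _ Prod.swap_injective]
    omega


def scell (s i : ℕ) : Cell :=
  (if (i / s) % 2 = 0 then ((i % s : ℕ) : ℤ) else (s : ℤ) - 1 - ((i % s : ℕ) : ℤ),
    ((i / s : ℕ) : ℤ))

lemma step_facts {s i : ℕ} (hs : 0 < s) :
    ((i+1) % s = 0 ∧ i % s = s - 1 ∧ (i+1)/s = i/s + 1) ∨
    ((i+1) % s = i % s + 1 ∧ (i+1)/s = i/s ∧ i % s + 1 < s) := by
  have hr := Nat.mod_lt i hs
  have hkey := Nat.div_add_mod i s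
  rcases Nat.lt_or_ge (i % s + 1) s with h | h
  · right
    have hi1 : i + 1 = s * (i/s) + (i%s+1) := by omega
    refine ⟨?_, ?_, h⟩
    · rw [hi1, Nat.mul_add_mod, Nat.mod_eq_of_lt h]
    · rw [hi1, Nat.mul_add_div hs, Nat.div_eq_of_lt h, add_zero]
  · left
    have hveq : i % s + 1 = s := by omega
    have h2 : i + 1 = s * (i/s + 1) := by rw [Nat.mul_succ]; omega
    refine ⟨?_, by omega, ?_⟩
    · rw [h2, Nat.mul_mod_right]
    · rw [h2, Nat.mul_div_cancel_left _ hs]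

lemma abs_one_of {x y : ℤ} (h : x = y + 1 ∨ y = x + 1) : |x - y| = 1 := by
  rcases h with rfl | rfl <;> simp

lemma scell_inj {s : ℕ} (hs : 0 < s) : Function.Injective (scell s) := by
  intro i j h
  rw [scell, scell, Prod.mk.injEq] at h
  have hdiv : i / s = j / s := by exact_mod_cast h.2
  have h1 := h.1
  rw [hdiv] at h1
  have hmod : i % s = j % s := by
    by_cases hp : (j / s) % 2 = 0 <;> simp only [hp, if_true, if_false] at h1 <;> omega
  have e1 : i = s * (j / s) + (j % s) := by rw [← hdiv, ← hmod]; exact (Nat.div_add_mod i s).symm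
  rw [e1, Nat.div_add_mod]

lemma scell_mem {s i : ℕ} (hi : i < s * s) : scell s i ∈ board s s := by
  have hs : 0 < s := Nat.pos_of_ne_zero (by rintro rfl; omega)
  have hmod : i % s < s := Nat.mod_lt i hs
  have hdiv : i / s < s := Nat.div_lt_of_lt_mul hi
  simp only [scell, board, Set.mem_setOf_eq]
  set r := i % s with hr
  set q := i / s with hq
  clear_value r q
  by_cases hp : q % 2 = 0
  · rw [if_pos hp]
    refine ⟨?_, ?_, ?_, ?_⟩ <;> omega
  · rw [if_neg hp]
    refine ⟨?_, ?_, ?_, ?_⟩ <;> omega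

lemma habs1 {x y z w : ℤ} (h1 : x = y) (h2 : z = w + 1 ∨ w = z + 1) :
    |x - y| + |z - w| = 1 := by
  rw [h1, sub_self, abs_zero, zero_add]
  exact abs_one_of h2

lemma habs2 {x y z w : ℤ} (h1 : x = y + 1 ∨ y = x + 1) (h2 : z = w) :
    |x - y| + |z - w| = 1 := by
  rw [h2, sub_self, abs_zero, add_zero]
  exact abs_one_of h1

lemma scell_adj {s i : ℕ} (hi : i + 1 < s * s) : (gridGraph s s).Adj (scell s i) (scell s (i+1)) := by
  have hs : 0 < s := Nat.pos_of_ne_zero (by rintro rfl; omega)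
  have hmod : i % s < s := Nat.mod_lt i hs
  refine ⟨scell_mem (by omega), scell_mem hi, ?_⟩
  simp only [scell]
  rcases step_facts (i := i) hs with ⟨h0, h1, h2⟩ | ⟨h1, h2, h3⟩
  · -- new row
    rw [h0, h1, h2]
    set q := i / s with hqq
    clear_value q
    by_cases hp : q % 2 = 0
    · rw [if_pos hp, if_neg (show ¬((q+1) % 2 = 0) by omega)]
      exact habs1 (by omega) (by omega)
    · rw [if_neg hp, if_pos (show (q+1) % 2 = 0 by omega)]
      exact habs1 (by omega) (by omega)
  · -- same row
    rw [h1, h2]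
    set r := i % s with hrr
    set q := i / s with hqq
    clear_value r q
    by_cases hp : q % 2 = 0
    · rw [if_pos hp, if_pos hp]
      exact habs2 (by omega) (by omega)
    · rw [if_neg hp, if_neg hp]
      exact habs2 (by omega) (by omega)

lemma scell_fst_ne {s i : ℕ} (hs : 0 < s) (h0 : (i+1) % s ≠ 0) :
    (scell s i).1 ≠ (scell s (i+1)).1 := by
  rcases step_facts (i := i) hs with ⟨h1, -, -⟩ | ⟨h1, h2, h3⟩
  · exact absurd h1 h0
  · simp only [scell, h1, h2]
    have hmod : i % s < s := Nat.mod_lt i hs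
    set r := i % s with hrr
    set q := i / s with hqq
    clear_value r q
    by_cases hp : q % 2 = 0
    · rw [if_pos hp, if_pos hp]
      intro hh
      omega
    · rw [if_neg hp, if_neg hp]
      intro hh
      omega

def snakeWalk (s : ℕ) : (i : ℕ) → i < s * s → (gridGraph s s).Walk (scell s 0) (scell s i)
  | 0, _ => Walk.nil
  | (i+1), hi => (snakeWalk s i (by omega)).concat (scell_adj hi)

lemma snakeWalk_support (s : ℕ) : ∀ (i : ℕ) (h : i < s * s),
    (snakeWalk s i h).support = (List.range (i+1)).map (scell s) := by
  intro i
  induction i with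
  | zero => intro h; simp [snakeWalk, List.range_succ]
  | succ n ih =>
    intro h
    rw [snakeWalk, Walk.support_concat, ih (by omega), List.range_succ (n := n+1)]
    simp

lemma snakeWalk_edges (s : ℕ) : ∀ (i : ℕ) (h : i < s * s),
    (snakeWalk s i h).edges = (List.range i).map (fun j => s(scell s j, scell s (j+1))) := by
  intro i
  induction i with
  | zero => intro h; simp [snakeWalk]
  | succ n ih =>
    intro h
    rw [snakeWalk, Walk.edges_concat, ih (by omega), List.range_succ (n := n)]
    simp

lemma snakeWalk_isPath {s : ℕ} (hs : 0 < s) (i : ℕ) (h : i < s * s) :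
    (snakeWalk s i h).IsPath := by
  apply Walk.IsPath.mk'
  rw [snakeWalk_support]
  exact (List.nodup_range).map (scell_inj hs)

lemma snakeWalk_ham {s : ℕ} (hs : 0 < s) (h : s * s - 1 < s * s) :
    IsHamOn (sqBoard s) (snakeWalk s (s*s-1) h) := by
  constructor
  · exact snakeWalk_isPath hs _ h
  · intro v
    rw [snakeWalk_support, List.mem_map]
    have hss : s * s - 1 + 1 = s * s := by
      have : 0 < s * s := Nat.mul_pos hs hs
      omega
    rw [hss]
    constructor
    · rintro ⟨hx1, hx2, hy1, hy2⟩
      set q := v.2.toNat with hq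
      set r := (if q % 2 = 0 then v.1.toNat else s - 1 - v.1.toNat) with hr
      have hqs : q < s := by omega
      have hxs : v.1.toNat < s := by omega
      have hrs : r < s := by rw [hr]; split <;> omega
      refine ⟨s * q + r, ?_, ?_⟩
      · rw [List.mem_range]
        calc s * q + r < s * q + s := by omega
        _ = s * (q + 1) := by rw [Nat.mul_succ]
        _ ≤ s * s := Nat.mul_le_mul_left s (by omega)
      · have hdiv : (s * q + r) / s = q := by
          rw [Nat.mul_add_div hs, Nat.div_eq_of_lt hrs, add_zero]
        have hmod : (s * q + r) % s = r := by
          rw [Nat.mul_add_mod, Nat.mod_eq_of_lt hrs]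
        rw [scell, hdiv, hmod]
        have hv2 : (q : ℤ) = v.2 := by rw [hq]; omega
        by_cases hp : q % 2 = 0
        · rw [if_pos hp]
          have : (r : ℤ) = v.1 := by rw [hr, if_pos hp]; omega
          rw [this, hv2]
        · rw [if_neg hp]
          have : (r : ℤ) = (s : ℤ) - 1 - v.1 := by rw [hr, if_neg hp]; push_cast; omega
          rw [this, hv2]
          simp [Prod.ext_iff]
    · rintro ⟨j, hj, rfl⟩
      rw [List.mem_range] at hj
      exact scell_mem hj

lemma snake_turn_le {s : ℕ} (hs : 0 < s) (h : s * s - 1 < s * s) :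
    turnCount (snakeWalk s (s*s-1) h) ≤ 2 * s - 2 := by
  classical
  set p := snakeWalk s (s*s-1) h with hp
  set F : Finset Cell :=
    (Finset.Icc 1 (s-1)).biUnion (fun k => {scell s (s*k-1), scell s (s*k)}) with hF
  have hsub : {c : Cell | TurnsAt p c} ⊆ (F : Set Cell) := by
    rintro c ⟨u, v, hne, h1, h2, hd⟩
    have hvert : ∃ d : Cell, s(c, d) ∈ p.edges ∧ d.1 = c.1 := by
      rcases hd with ⟨e1, e2⟩ | ⟨e1, e2⟩
      · exact ⟨v, h2, e2⟩
      · exact ⟨u, by rwa [Sym2.eq_swap] at h1, e1⟩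
    obtain ⟨d, hd1, hd2⟩ := hvert
    rw [hp, snakeWalk_edges, List.mem_map] at hd1
    obtain ⟨j, hj, hde⟩ := hd1
    rw [List.mem_range] at hj
    have hj0 : (j+1) % s = 0 := by
      by_contra h0
      have hne2 := scell_fst_ne hs h0
      rw [Sym2.eq_iff] at hde
      rcases hde with ⟨hc, hdd⟩ | ⟨hc, hdd⟩
      · rw [hc, hdd] at hne2; exact hne2 hd2.symm
      · rw [hc, hdd] at hne2; exact hne2 hd2
    have hk : j + 1 = s * ((j+1)/s) := by
      conv_lhs => rw [← Nat.div_add_mod (j+1) s]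
      rw [hj0, add_zero]
    set k := (j+1)/s with hkk
    have hk1 : 1 ≤ k := by
      rcases Nat.eq_zero_or_pos k with h1 | h1
      · rw [h1, Nat.mul_zero] at hk; omega
      · exact h1
    have hks : k ≤ s - 1 := by
      have : s * k < s * s := by omega
      have := Nat.lt_of_mul_lt_mul_left this
      omega
    rw [Sym2.eq_iff] at hde
    have hcc : c = scell s (s*k-1) ∨ c = scell s (s*k) := by
      rcases hde with ⟨hc, -⟩ | ⟨-, hc⟩
      · left
        have he : s * k - 1 = j := by omega
        rw [he]
        exact hc.symm
      · right
        have he : s * k = j + 1 := by omega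
        rw [he]
        exact hc.symm
    rw [hF]
    simp only [Finset.coe_biUnion, Set.mem_iUnion, Finset.mem_coe, Finset.mem_Icc]
    refine ⟨k, ⟨hk1, hks⟩, ?_⟩
    rcases hcc with rfl | rfl
    · exact Finset.mem_insert_self _ _
    · exact Finset.mem_insert_of_mem (Finset.mem_singleton_self _)
  calc turnCount p ≤ (F : Set Cell).ncard :=
        Set.ncard_le_ncard hsub (F.finite_toSet)
  _ = F.card := Set.ncard_coe_finset F
  _ ≤ ∑ k ∈ Finset.Icc 1 (s-1), ({scell s (s*k-1), scell s (s*k)} : Finset Cell).card :=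
        Finset.card_biUnion_le
  _ ≤ ∑ k ∈ Finset.Icc 1 (s-1), 2 := by
        apply Finset.sum_le_sum
        intro k _
        calc ({scell s (s*k-1), scell s (s*k)} : Finset Cell).card
            ≤ ({scell s (s*k)} : Finset Cell).card + 1 := Finset.card_insert_le _ _
        _ ≤ 2 := by rw [Finset.card_singleton]
  _ = 2 * s - 2 := by
        rw [Finset.sum_const, Nat.card_Icc, smul_eq_mul]
        omega

/-- the smallest number of turns in a Hamiltonian path of the s×s grid
graph is 2s − 2. -/
theorem grid_min_turns (s : ℕ) (hs : 0 < s) :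
    IsLeast {t : ℕ | ∃ (a b : Cell) (p : (gridGraph s s).Walk a b),
      IsHamOn (sqBoard s) p ∧ turnCount p = t} (2 * s - 2) := by
  constructor
  · have h : s * s - 1 < s * s := by
      have := Nat.mul_pos hs hs
      omega
    refine ⟨scell s 0, scell s (s*s-1), snakeWalk s (s*s-1) h, snakeWalk_ham hs h, ?_⟩
    have h1 := snake_turn_le hs h
    have h2 := turn_lower (snakeWalk_ham hs h)
    omega
  · rintro t ⟨a, b, p, hp, rfl⟩
    exact turn_lower hp
end

section
/- In a fewest-turn Hamiltonian path ρ of the k×k grid graph which is mostly-horizontal (having exactly one horizontal segment in each row), the distinguished edge a'a'' of any free cycle a'a''b'b'' relative to ρ must be vertical. -/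
open SimpleGraph

section Aux

lemma grid_adj_cases_s11 {m n : ℕ} {p q : Cell} (h : (gridGraph m n).Adj p q) :
    (q.1 = p.1 + 1 ∧ q.2 = p.2) ∨ (q.1 = p.1 - 1 ∧ q.2 = p.2) ∨
    (q.1 = p.1 ∧ q.2 = p.2 + 1) ∨ (q.1 = p.1 ∧ q.2 = p.2 - 1) := by
  obtain ⟨-, -, h3⟩ := h
  rcases abs_cases (p.1 - q.1) with ⟨h1, _⟩ | ⟨h1, _⟩ <;>
  rcases abs_cases (p.2 - q.2) with ⟨h2, _⟩ | ⟨h2, _⟩ <;>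
    rw [h1, h2] at h3 <;> omega

lemma start_unique {V : Type*} {G : SimpleGraph V} {a b : V} {p : G.Walk a b} (hp : p.IsPath)
    {u v : V} (hu : s(u,a) ∈ p.edges) (hv : s(v,a) ∈ p.edges) : u = v := by
  cases p with
  | nil => simp at hu
  | @cons a d b h q =>
    rw [Walk.cons_isPath_iff] at hp
    rw [Walk.edges_cons, List.mem_cons] at hu hv
    have key : ∀ w : V, s(w,a) = s(a, d) ∨ s(w,a) ∈ q.edges → w = d := by
      intro w hw
      rcases hw with hw | hw
      · rw [Sym2.eq_iff] at hw
        rcases hw with ⟨rfl, h2⟩ | ⟨rfl, -⟩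
        · exact absurd h2 h.ne
        · rfl
      · exact absurd (Walk.snd_mem_support_of_mem_edges q hw) hp.2
    rw [key u hu, key v hv]

lemma degree_le_two {V : Type*} {G : SimpleGraph V} {c u v w : V} {b : V} :
    ∀ {a : V} (p : G.Walk a b), p.IsPath → s(u,c) ∈ p.edges → s(v,c) ∈ p.edges →
    s(w,c) ∈ p.edges → u ≠ v → u ≠ w → v ≠ w → False := by
  intro a p
  induction p with
  | nil => intro _ hu _ _ _ _ _; simp at hu
  | @cons a d b h q ih =>
    intro hp hu hv hw huv huw hvw
    by_cases hca : c = a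
    · subst hca; exact huv (start_unique hp hu hv)
    have hp' := (Walk.cons_isPath_iff h q).1 hp
    rw [Walk.edges_cons, List.mem_cons] at hu hv hw
    have key : ∀ x : V, s(x,c) = s(a, d) → x = a ∧ c = d := by
      intro x hx
      rw [Sym2.eq_iff] at hx
      rcases hx with ⟨rfl, rfl⟩ | ⟨-, h2⟩
      · exact ⟨rfl, rfl⟩
      · exact absurd h2 hca
    have qstart : ∀ x y : V, c = d → s(x,c) ∈ q.edges → s(y,c) ∈ q.edges → x = y := by
      intro x y hcd hx hy
      subst hcd
      exact start_unique hp'.1 hx hy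
    rcases hu with hu | hu
    · obtain ⟨rfl, hcd⟩ := key _ hu
      rcases hv with hv | hv
      · exact huv (key _ hv).1.symm
      rcases hw with hw | hw
      · exact huw (key _ hw).1.symm
      exact hvw (qstart _ _ hcd hv hw)
    rcases hv with hv | hv
    · obtain ⟨rfl, hcd⟩ := key _ hv
      rcases hw with hw | hw
      · exact hvw (key _ hw).1.symm
      exact huw (qstart _ _ hcd hu hw)
    rcases hw with hw | hw
    · obtain ⟨rfl, hcd⟩ := key _ hw
      exact huv (qstart _ _ hcd hu hv)
    exact ih hp'.1 hu hv hw huv huw hvw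

lemma internal_two_edges {V : Type*} {G : SimpleGraph V} {c : V} {b : V} :
    ∀ {a : V} (p : G.Walk a b), p.IsPath → c ∈ p.support → c ≠ a → c ≠ b →
      ∃ u v, u ≠ v ∧ s(u,c) ∈ p.edges ∧ s(c,v) ∈ p.edges := by
  intro a p
  induction p with
  | nil => intro _ hc hca _; simp at hc; exact absurd hc hca
  | @cons a d b h q ih =>
    intro hp hc hca hcb
    rw [Walk.support_cons, List.mem_cons] at hc
    have hp' := (Walk.cons_isPath_iff h q).1 hp
    rcases hc with rfl | hc
    · exact absurd rfl hca
    by_cases hcd : c = d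
    · subst hcd
      cases q with
      | nil => exact absurd rfl hcb
      | @cons _ e b2 h2 q2 =>
        refine ⟨a, e, ?_, ?_, ?_⟩
        · intro hae
          apply hp'.2
          rw [hae, Walk.support_cons]
          exact List.mem_cons_of_mem _ q2.start_mem_support
        · rw [Walk.edges_cons]; exact List.mem_cons_self
        · rw [Walk.edges_cons, Walk.edges_cons]
          exact List.mem_cons_of_mem _ List.mem_cons_self
    · obtain ⟨u, v, huv, hu, hv⟩ := ih hp'.1 hc hcd hcb
      exact ⟨u, v, huv, List.mem_cons_of_mem _ hu, List.mem_cons_of_mem _ hv⟩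

lemma mem_pair_of_edges {V : Type*} {G : SimpleGraph V} {a b : V} {p : G.Walk a b}
    (hp : p.IsPath) {c u v w : V} (hu : s(u,c) ∈ p.edges) (hv : s(v,c) ∈ p.edges)
    (hw : s(w,c) ∈ p.edges) (huv : u ≠ v) : w = u ∨ w = v := by
  by_contra hcon
  push_neg at hcon
  exact degree_le_two p hp hu hv hw huv (Ne.symm hcon.1) (Ne.symm hcon.2)

lemma not_turn_and_straight {G : SimpleGraph Cell} {a b : Cell} {p : G.Walk a b}
    (hp : p.IsPath) {c : Cell} (ht : TurnsAt p c) (hs : GoesStraight p c) : False := by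
  obtain ⟨u, v, huv, hu, hv, hpat⟩ := ht
  obtain ⟨u', v', huv', hu', hv', hpat'⟩ := hs
  rw [Sym2.eq_swap] at hv hv'
  have hune : u ≠ c := (Walk.adj_of_mem_edges p hu).ne
  have hvne : v ≠ c := (Walk.adj_of_mem_edges p hv).ne
  have hu'm := mem_pair_of_edges hp hu hv hu' huv
  have hv'm := mem_pair_of_edges hp hu hv hv' huv
  have huc : ¬ (u.1 = c.1 ∧ u.2 = c.2) := fun ⟨h1, h2⟩ => hune (Prod.ext h1 h2)
  have hvc : ¬ (v.1 = c.1 ∧ v.2 = c.2) := fun ⟨h1, h2⟩ => hvne (Prod.ext h1 h2)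
  have hboth : (u' = u ∧ v' = v) ∨ (u' = v ∧ v' = u) := by
    rcases hu'm with rfl | rfl <;> rcases hv'm with rfl | rfl <;> tauto
  rcases hboth with ⟨rfl, rfl⟩ | ⟨rfl, rfl⟩ <;> rcases hpat with ⟨e1, e2⟩ | ⟨e1, e2⟩ <;>
    rcases hpat' with ⟨f1, f2⟩ | ⟨f1, f2⟩ <;> tauto

lemma turn_of_dead_end {k : ℕ} {a b : Cell} {p : (gridGraph k k).Walk a b} (hp : p.IsPath)
    {c u0 : Cell} (hu0 : s(u0, c) ∈ p.edges) (hh : u0.2 = c.2)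
    (hopp : s(c, ((2 * c.1 - u0.1, c.2) : Cell)) ∉ p.edges)
    (hca : c ≠ a) (hcb : c ≠ b) : TurnsAt p c := by
  have hcs : c ∈ p.support := Walk.snd_mem_support_of_mem_edges p hu0
  obtain ⟨u, v, huv, hu, hv⟩ := internal_two_edges p hp hcs hca hcb
  have hadj0 := Walk.adj_of_mem_edges p hu0
  have hu01 : u0.1 = c.1 + 1 ∨ u0.1 = c.1 - 1 := by
    rcases grid_adj_cases_s11 hadj0.symm with ⟨h1, h2⟩ | ⟨h1, h2⟩ | ⟨h1, h2⟩ | ⟨h1, h2⟩ <;> omega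
  rw [Sym2.eq_swap] at hv
  have hm := mem_pair_of_edges hp hu hv hu0 huv
  rcases hm with rfl | rfl
  · have hadjv := Walk.adj_of_mem_edges p hv
    have hvcase := grid_adj_cases_s11 hadjv.symm
    have hv1 : v.1 = c.1 := by
      rcases hvcase with ⟨h1, h2⟩ | ⟨h1, h2⟩ | ⟨h1, h2⟩ | ⟨h1, h2⟩
      · rcases hu01 with h0 | h0
        · exact absurd (Prod.ext (by omega) (by omega) : v = u0) (Ne.symm huv)
        · exfalso; apply hopp
          have : ((2 * c.1 - u0.1, c.2) : Cell) = v := Prod.ext (by omega) (by omega)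
          rw [this, Sym2.eq_swap]; exact hv
      · rcases hu01 with h0 | h0
        · exfalso; apply hopp
          have : ((2 * c.1 - u0.1, c.2) : Cell) = v := Prod.ext (by omega) (by omega)
          rw [this, Sym2.eq_swap]; exact hv
        · exact absurd (Prod.ext (by omega) (by omega) : v = u0) (Ne.symm huv)
      · exact h1
      · exact h1
    exact ⟨u0, v, huv, hu0, by rw [Sym2.eq_swap]; exact hv, Or.inl ⟨hh, hv1⟩⟩
  · have hadju := Walk.adj_of_mem_edges p hu
    have hucase := grid_adj_cases_s11 hadju.symm
    have hu1 : u.1 = c.1 := by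
      rcases hucase with ⟨h1, h2⟩ | ⟨h1, h2⟩ | ⟨h1, h2⟩ | ⟨h1, h2⟩
      · rcases hu01 with h0 | h0
        · exact absurd (Prod.ext (by omega) (by omega) : u = u0) huv
        · exfalso; apply hopp
          have : ((2 * c.1 - u0.1, c.2) : Cell) = u := Prod.ext (by omega) (by omega)
          rw [this, Sym2.eq_swap]; exact hu
      · rcases hu01 with h0 | h0
        · exfalso; apply hopp
          have : ((2 * c.1 - u0.1, c.2) : Cell) = u := Prod.ext (by omega) (by omega)
          rw [this, Sym2.eq_swap]; exact hu
        · exact absurd (Prod.ext (by omega) (by omega) : u = u0) huv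
      · exact h1
      · exact h1
    exact ⟨u, u0, huv, hu, by rw [Sym2.eq_swap]; exact hu0, Or.inr ⟨hu1, hh⟩⟩

end Aux

/-- in a mostly-horizontal fewest-turn Hamiltonian path of the k×k grid
graph, the distinguished edge of every free cycle is vertical. -/
theorem free_cycle_vertical (k : ℕ) {a b : Cell} (rho : (gridGraph k k).Walk a b)
    (h1 : IsHamOn (sqBoard k) rho) (h2 : turnCount rho = 2 * k - 2)
    (hmh : ∀ y : ℤ, 0 ≤ y → y ≤ (k : ℤ) - 1 →
      ∃ x : ℤ, s(((x, y) : Cell), ((x + 1, y) : Cell)) ∈ rho.edges)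
    (a' a'' b' b'' : Cell) (hf : FreeCycle rho a' a'' b' b'') :
    a'.1 = a''.1 := by
  by_contra hne
  obtain ⟨hq, hqr, hrs, hsp, he1, he2, he3, he4, hst1, hst2, ht1, ht2⟩ := hf
  obtain ⟨hpath, hsupp⟩ := h1
  have hDq := grid_adj_cases_s11 hq
  have hDs := grid_adj_cases_s11 hsp.symm
  have hDr := grid_adj_cases_s11 hqr
  have hDrs := grid_adj_cases_s11 hrs
  have main : ((b''.2 = a'.2 + 1 ∨ b''.2 = a'.2 - 1) ∧ b''.1 = a'.1 ∧ b'.1 = a''.1 ∧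
      b'.2 = b''.2) ∨ (b'.1 = a'.1 ∧ b'.2 = a'.2) ∨ (b''.1 = a''.1 ∧ b''.2 = a''.2) := by
    omega
  rcases main with ⟨hey, hb1, hb2, hb3⟩ | ⟨h1', h2'⟩ | ⟨h1', h2'⟩
  rotate_left
  · -- b' = a'
    have hba : b' = a' := Prod.ext h1' h2'
    rw [hba] at ht1
    exact not_turn_and_straight hpath ht1 hst1
  · -- b'' = a''
    have hba : b'' = a'' := Prod.ext h1' h2'
    rw [hba] at he4
    exact he4 (Sym2.eq_swap ▸ he1)
  -- main case
  have hq2 : a''.2 = a'.2 ∧ (a''.1 = a'.1 + 1 ∨ a''.1 = a'.1 - 1) := by omega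
  -- horizontal rho-edge at b''
  have hwB : ∃ w : Cell, s(w, b'') ∈ rho.edges ∧ w.2 = b''.2 := by
    obtain ⟨u, v, huv, hu, hv, hpat⟩ := ht2
    rcases hpat with ⟨hh1, hh2⟩ | ⟨hh1, hh2⟩
    · exact ⟨u, hu, hh1⟩
    · exact ⟨v, by rw [Sym2.eq_swap]; exact hv, hh2⟩
  obtain ⟨w, hwmem, hw2⟩ := hwB
  have hwadj := grid_adj_cases_s11 (Walk.adj_of_mem_edges rho hwmem).symm
  have hwx : w.1 = b''.1 + 1 ∨ w.1 = b''.1 - 1 := by omega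
  have hwnotb' : w ≠ b' := by rintro rfl; exact he3 hwmem
  have hwne1 : w.1 ≠ b'.1 := fun h => hwnotb' (Prod.ext h (by omega))
  have hw1 : w.1 = 2 * a'.1 - a''.1 := by omega
  -- horizontal rho-edge at b'
  have hwB' : ∃ w : Cell, s(w, b') ∈ rho.edges ∧ w.2 = b'.2 := by
    obtain ⟨u, v, huv, hu, hv, hpat⟩ := ht1
    rcases hpat with ⟨hh1, hh2⟩ | ⟨hh1, hh2⟩
    · exact ⟨u, hu, hh1⟩
    · exact ⟨v, by rw [Sym2.eq_swap]; exact hv, hh2⟩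
  obtain ⟨w', hwmem', hw2'⟩ := hwB'
  have hwadj' := grid_adj_cases_s11 (Walk.adj_of_mem_edges rho hwmem').symm
  have hwx' : w'.1 = b'.1 + 1 ∨ w'.1 = b'.1 - 1 := by omega
  have hwnotb'' : w' ≠ b'' := by
    rintro rfl; exact he3 (Sym2.eq_swap ▸ hwmem')
  have hwne1' : w'.1 ≠ b''.1 := fun h => hwnotb'' (Prod.ext h (by omega))
  have hw1' : w'.1 = 2 * a''.1 - a'.1 := by omega
  -- bounds for cells on rho-edges
  have hbdd : ∀ y x : ℤ, s(((x, y) : Cell), ((x + 1, y) : Cell)) ∈ rho.edges →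
      0 ≤ x ∧ x + 1 ≤ (k:ℤ) - 1 ∧ 0 ≤ y ∧ y ≤ (k:ℤ) - 1 := by
    intro y x hx
    obtain ⟨hA, hB, -⟩ := Walk.adj_of_mem_edges rho hx
    exact ⟨hA.1, hB.2.1, hA.2.2.1, hA.2.2.2⟩
  -- greatest and least x with a horizontal rho-edge in each row
  have hmm : ∀ y : ℤ, ∃ XM Xm : ℤ, 0 ≤ y → y ≤ (k:ℤ) - 1 →
      ((s(((XM, y) : Cell), ((XM + 1, y) : Cell)) ∈ rho.edges) ∧
       (∀ x : ℤ, s(((x, y) : Cell), ((x + 1, y) : Cell)) ∈ rho.edges → x ≤ XM) ∧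
       (s(((Xm, y) : Cell), ((Xm + 1, y) : Cell)) ∈ rho.edges) ∧
       (∀ x : ℤ, s(((x, y) : Cell), ((x + 1, y) : Cell)) ∈ rho.edges → Xm ≤ x)) := by
    intro y
    by_cases hy : 0 ≤ y ∧ y ≤ (k:ℤ) - 1
    · obtain ⟨XM, hXM1, hXM2⟩ := Int.exists_greatest_of_bdd
        (P := fun x => s(((x, y) : Cell), ((x + 1, y) : Cell)) ∈ rho.edges)
        ⟨(k:ℤ), fun z hz => by have := hbdd y z hz; omega⟩ (hmh y hy.1 hy.2)
      obtain ⟨Xm, hXm1, hXm2⟩ := Int.exists_least_of_bdd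
        (P := fun x => s(((x, y) : Cell), ((x + 1, y) : Cell)) ∈ rho.edges)
        ⟨0, fun z hz => (hbdd y z hz).1⟩ (hmh y hy.1 hy.2)
      exact ⟨XM, Xm, fun _ _ => ⟨hXM1, hXM2, hXm1, hXm2⟩⟩
    · exact ⟨0, 0, fun hy1 hy2 => absurd ⟨hy1, hy2⟩ hy⟩
  choose XM Xm hX using hmm
  -- row of b'' is on the board
  have hbb : b'' ∈ board k k := hrs.2.1
  obtain ⟨hB1, hB2, hB3, hB4⟩ := hbb
  obtain ⟨hM1, hM2, hm1, hm2⟩ := hX b''.2 hB3 hB4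
  -- separation: both b'.1 and b''.1 lie strictly inside (Xm - 1, XM + 1)
  have hsep : Xm b''.2 < b''.1 ∧ Xm b''.2 < b'.1 ∧ b''.1 ≤ XM b''.2 ∧ b'.1 ≤ XM b''.2 := by
    rcases hq2.2 with hd | hd
    · -- a''.1 = a'.1 + 1 : w = (b''.1 - 1, y'), w' = (b'.1 + 1, y')
      have e1 : w = ((b''.1 - 1, b''.2) : Cell) := Prod.ext (by omega) hw2
      have e2 : ((b''.1 - 1 + 1, b''.2) : Cell) = b'' := Prod.ext (by omega) rfl
      have m1 : s(((b''.1 - 1, b''.2) : Cell), ((b''.1 - 1 + 1, b''.2) : Cell)) ∈ rho.edges := by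
        rw [e2, ← e1]; exact hwmem
      have e3 : ((b'.1, b''.2) : Cell) = b' := Prod.ext rfl (by omega)
      have e4 : ((b'.1 + 1, b''.2) : Cell) = w' := Prod.ext (by omega) (by omega)
      have m2 : s(((b'.1, b''.2) : Cell), ((b'.1 + 1, b''.2) : Cell)) ∈ rho.edges := by
        rw [e3, e4, Sym2.eq_swap]; exact hwmem'
      have i1 := hm2 _ m1
      have i2 := hM2 _ m2
      omega
    · -- a''.1 = a'.1 - 1 : w = (b''.1 + 1, y'), w' = (b'.1 - 1, y')
      have e1 : ((b''.1, b''.2) : Cell) = b'' := Prod.ext rfl rfl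
      have e2 : ((b''.1 + 1, b''.2) : Cell) = w := Prod.ext (by omega) (by omega)
      have m1 : s(((b''.1, b''.2) : Cell), ((b''.1 + 1, b''.2) : Cell)) ∈ rho.edges := by
        rw [e1, e2, Sym2.eq_swap]; exact hwmem
      have e3 : ((b'.1 - 1, b''.2) : Cell) = w' := Prod.ext (by omega) (by omega)
      have e4 : ((b'.1 - 1 + 1, b''.2) : Cell) = b' := Prod.ext (by omega) (by omega)
      have m2 : s(((b'.1 - 1, b''.2) : Cell), ((b'.1 - 1 + 1, b''.2) : Cell)) ∈ rho.edges := by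
        rw [e3, e4]; exact hwmem'
      have i1 := hm2 _ m1
      have i2 := hM2 _ m2
      have i3 := hM2 _ m1
      have i4 := hm2 _ m2
      omega
  -- the finset of run-end cells
  classical
  set F : Finset Cell := (Finset.Icc (0:ℤ) ((k:ℤ) - 1)).biUnion
    (fun y => {((Xm y, y) : Cell), ((XM y + 1, y) : Cell)}) with hF
  have hsnd : ∀ c : Cell, c ∈ F → (c.2 ∈ Finset.Icc (0:ℤ) ((k:ℤ) - 1) ∧
      (c.1 = Xm c.2 ∨ c.1 = XM c.2 + 1)) := by
    intro c hc
    rw [hF, Finset.mem_biUnion] at hc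
    obtain ⟨y, hy, hcy⟩ := hc
    rcases Finset.mem_insert.1 hcy with rfl | hcy
    · exact ⟨hy, Or.inl rfl⟩
    · rw [Finset.mem_singleton] at hcy
      subst hcy
      exact ⟨hy, Or.inr rfl⟩
  have hcardF : F.card = 2 * k := by
    rw [hF, Finset.card_biUnion]
    · have hsame : ∀ y ∈ Finset.Icc (0:ℤ) ((k:ℤ) - 1),
          ({((Xm y, y) : Cell), ((XM y + 1, y) : Cell)} : Finset Cell).card = 2 := by
        intro y hy
        rw [Finset.mem_Icc] at hy
        obtain ⟨hA, hB, hC, hD⟩ := hX y hy.1 hy.2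
        have hle := hD _ hA
        rw [Finset.card_insert_of_notMem, Finset.card_singleton]
        rw [Finset.mem_singleton]
        intro hcon
        have := congrArg Prod.fst hcon
        simp at this
        omega
      rw [Finset.sum_congr rfl hsame, Finset.sum_const, Int.card_Icc]
      simp [smul_eq_mul]
      omega
    · intro y1 hy1 y2 hy2 hne12
      rw [Function.onFun, Finset.disjoint_left]
      intro c hc1 hc2
      have e1 : c.2 = y1 := by
        rcases Finset.mem_insert.1 hc1 with rfl | hc1
        · rfl
        · rw [Finset.mem_singleton] at hc1; subst hc1; rfl
      have e2 : c.2 = y2 := by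
        rcases Finset.mem_insert.1 hc2 with rfl | hc2
        · rfl
        · rw [Finset.mem_singleton] at hc2; subst hc2; rfl
      exact hne12 (e1 ▸ e2)
  have hbne : b'.1 ≠ b''.1 := by omega
  have hb''F : b'' ∉ F := by
    intro hc
    obtain ⟨-, hc2⟩ := hsnd b'' hc
    omega
  have hb'F : b' ∉ insert b'' F := by
    rw [Finset.mem_insert]
    rintro (hc | hc)
    · exact hbne (congrArg Prod.fst hc)
    · obtain ⟨-, hc2⟩ := hsnd b' hc
      rw [hb3] at hc2
      omega
  set F' : Finset Cell := insert b' (insert b'' F) with hF'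
  have hcardF' : F'.card = 2 * k + 2 := by
    rw [hF', Finset.card_insert_of_notMem hb'F, Finset.card_insert_of_notMem hb''F, hcardF]
  -- every cell of F' is a turn cell or an endpoint of rho
  have hsub : (↑F' : Set Cell) ⊆ {c : Cell | TurnsAt rho c} ∪ {a, b} := by
    intro c hc
    rw [hF'] at hc
    simp only [Finset.coe_insert, Set.mem_insert_iff, Finset.mem_coe] at hc
    rcases hc with rfl | rfl | hc
    · exact Or.inl ht1
    · exact Or.inl ht2
    by_cases hca : c = a
    · exact Or.inr (Or.inl hca)
    by_cases hcb : c = b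
    · exact Or.inr (Or.inr hcb)
    obtain ⟨hcIcc, hc12⟩ := hsnd c hc
    rw [Finset.mem_Icc] at hcIcc
    obtain ⟨hA, hB, hC, hD⟩ := hX c.2 hcIcc.1 hcIcc.2
    refine Or.inl ?_
    rcases hc12 with hcx | hcx
    · -- c = (Xm c.2, c.2) : left end
      have ec : ((Xm c.2, c.2) : Cell) = c := Prod.ext hcx.symm rfl
      refine turn_of_dead_end hpath (u0 := ((Xm c.2 + 1, c.2) : Cell))
        (by rw [Sym2.eq_swap, ec] at hC; exact hC) rfl ?_ hca hcb
      intro hcon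
      have eopp : ((2 * c.1 - (Xm c.2 + 1), c.2) : Cell) = ((Xm c.2 - 1, c.2) : Cell) :=
        Prod.ext (by omega) rfl
      have e5 : ((Xm c.2 - 1 + 1, c.2) : Cell) = c := Prod.ext (by omega) rfl
      have : s(((Xm c.2 - 1, c.2) : Cell), ((Xm c.2 - 1 + 1, c.2) : Cell)) ∈ rho.edges := by
        rw [e5, Sym2.eq_swap]
        rw [eopp] at hcon
        exact hcon
      have := hD _ this
      omega
    · -- c = (XM c.2 + 1, c.2) : right end
      have ec : ((XM c.2 + 1, c.2) : Cell) = c := Prod.ext hcx.symm rfl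
      refine turn_of_dead_end hpath (u0 := ((XM c.2, c.2) : Cell))
        (by rw [ec] at hA; exact hA) rfl ?_ hca hcb
      intro hcon
      have eopp : ((2 * c.1 - XM c.2, c.2) : Cell) = ((XM c.2 + 1 + 1, c.2) : Cell) :=
        Prod.ext (by omega) rfl
      have : s(((XM c.2 + 1, c.2) : Cell), ((XM c.2 + 1 + 1, c.2) : Cell)) ∈ rho.edges := by
        rw [ec, ← eopp]
        exact hcon
      have := hB _ this
      omega
  -- turn cells form a finite set of size 2k - 2
  have hfin : ({c : Cell | TurnsAt rho c}).Finite := by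
    refine Set.Finite.subset rho.support.toFinset.finite_toSet ?_
    intro c hc
    obtain ⟨u, v, -, hu, -, -⟩ := hc
    rw [Finset.mem_coe, List.mem_toFinset]
    exact Walk.snd_mem_support_of_mem_edges rho hu
  have hT : ({c : Cell | TurnsAt rho c}).ncard = 2 * k - 2 := h2
  have hk1 : 1 ≤ k := by omega
  have hle1 : (↑F' : Set Cell).ncard ≤ ({c : Cell | TurnsAt rho c} ∪ {a, b}).ncard :=
    Set.ncard_le_ncard hsub (hfin.union ((Set.finite_singleton b).insert a))
  have hle2 := Set.ncard_union_le ({c : Cell | TurnsAt rho c}) ({a, b} : Set Cell)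
  have hab : ({a, b} : Set Cell).ncard ≤ 2 := by
    have := Set.ncard_insert_le a ({b} : Set Cell)
    rw [Set.ncard_singleton] at this
    omega
  rw [Set.ncard_coe_finset, hcardF'] at hle1
  omega
end

section
/- The set S of all cells (x,y) ∈ ℤ² with x ≢ y (mod 3) induces in the infinite grid graph a subgraph in which every vertex has degree at most 2 (a pseudosnake), and S has density 2/3. -/
open SimpleGraph

/-- The infinite grid graph on ℤ². -/
def gridZ : SimpleGraph Cell where
  Adj a b := |a.1 - b.1| + |a.2 - b.2| = 1
  symm := by
    constructor
    intro a b h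
    rw [abs_sub_comm b.1 a.1, abs_sub_comm b.2 a.2]
    exact h
  loopless := by constructor; intro a h; simp at h

/-- the set of cells (x,y) with x ≢ y (mod 3) is a pseudosnake in the
infinite grid graph, of density 2/3. -/
theorem grid_pseudosnake_two_thirds :
    (∀ a ∈ {a : Cell | ¬ (3 : ℤ) ∣ (a.1 - a.2)},
      Set.ncard {b : Cell | ¬ (3 : ℤ) ∣ (b.1 - b.2) ∧ gridZ.Adj a b} ≤ 2) ∧
    (∀ x : ℤ, ((Finset.range 3).filter fun r : ℕ => ¬ (3 : ℤ) ∣ (x - (r : ℤ))).card = 2) := by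
  constructor
  · rintro ⟨x, y⟩ ha
    simp only [Set.mem_setOf_eq] at ha
    have h3 : (x - y) % 3 = 1 ∨ (x - y) % 3 = 2 := by omega
    have key : ∀ (p q : Cell),
        {b : Cell | ¬ (3 : ℤ) ∣ (b.1 - b.2) ∧ gridZ.Adj (x, y) b} ⊆ {p, q} →
        Set.ncard {b : Cell | ¬ (3 : ℤ) ∣ (b.1 - b.2) ∧ gridZ.Adj (x, y) b} ≤ 2 := by
      intro p q hsub
      calc Set.ncard {b : Cell | ¬ (3 : ℤ) ∣ (b.1 - b.2) ∧ gridZ.Adj (x, y) b}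
          ≤ Set.ncard {p, q} := Set.ncard_le_ncard hsub ((Set.finite_singleton q).insert p)
        _ ≤ 2 := (Set.ncard_insert_le _ _).trans (by simp)
    rcases h3 with h | h
    · refine key (x + 1, y) (x, y - 1) ?_
      rintro ⟨u, v⟩ ⟨hd, hadj⟩
      have hadj' : |x - u| + |y - v| = 1 := hadj
      simp only [Set.mem_insert_iff, Set.mem_singleton_iff, Prod.mk.injEq]
      rcases abs_cases (x - u) with ⟨e1, _⟩ | ⟨e1, _⟩ <;>
        rcases abs_cases (y - v) with ⟨e2, _⟩ | ⟨e2, _⟩ <;> rw [e1, e2] at hadj' <;> omega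
    · refine key (x - 1, y) (x, y + 1) ?_
      rintro ⟨u, v⟩ ⟨hd, hadj⟩
      have hadj' : |x - u| + |y - v| = 1 := hadj
      simp only [Set.mem_insert_iff, Set.mem_singleton_iff, Prod.mk.injEq]
      rcases abs_cases (x - u) with ⟨e1, _⟩ | ⟨e1, _⟩ <;>
        rcases abs_cases (y - v) with ⟨e2, _⟩ | ⟨e2, _⟩ <;> rw [e1, e2] at hadj' <;> omega
  · intro x
    have r3 : Finset.range 3 = {0, 1, 2} := rfl
    rw [r3]
    have h3 : x % 3 = 0 ∨ x % 3 = 1 ∨ x % 3 = 2 := by omega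
    rcases h3 with h | h | h
    · have d0 : (3 : ℤ) ∣ x := by omega
      have d1 : ¬ (3 : ℤ) ∣ (x - 1) := by omega
      have d2 : ¬ (3 : ℤ) ∣ (x - 2) := by omega
      simp [Finset.filter_insert, Finset.filter_singleton, d0, d1, d2]
    · have d0 : ¬ (3 : ℤ) ∣ x := by omega
      have d1 : (3 : ℤ) ∣ (x - 1) := by omega
      have d2 : ¬ (3 : ℤ) ∣ (x - 2) := by omega
      simp [Finset.filter_insert, Finset.filter_singleton, d0, d1, d2]
    · have d0 : ¬ (3 : ℤ) ∣ x := by omega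
      have d1 : ¬ (3 : ℤ) ∣ (x - 1) := by omega
      have d2 : (3 : ℤ) ∣ (x - 2) := by omega
      simp [Finset.filter_insert, Finset.filter_singleton, d0, d1, d2]
end
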